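/- arXiv:2501.19357 — 15 statements merged into one kernel-verified Lean document; each statement's English description precedes it below -/
import Mathlib

section
/- A subset S of V(G) is a maximal stalled set (a stalled set not properly contained in any stalled set) if and only if S is a maximal failed zero forcing set (a failed set such that adding any vertex of V(G)\S produces a zero forcing set). -/
variable {V : Type*} [Fintype V] [DecidableEq V]

/-- A fort: nonempty set such that no vertex outside has exactly one neighbor inside. -/
def Fort (G : SimpleGraph V) (W : Set V) : Prop :=
  W.Nonempty ∧ ∀ v ∉ W, ¬ ∃! w, w ∈ W ∧ G.Adj v w

/-- A minimal fort contains no fort as a proper subset. -/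
def MinimalFort (G : SimpleGraph V) (W : Set V) : Prop :=
  Fort G W ∧ ∀ W', Fort G W' → W' ⊆ W → W' = W

/-- The vertices that eventually get colored blue starting from `S`,
under the zero forcing color change rule. -/
inductive Blue (G : SimpleGraph V) (S : Set V) : V → Prop
  | init {v : V} (h : v ∈ S) : Blue G S v
  | force {u v : V} (hadj : G.Adj u v) (hu : Blue G S u)
      (h : ∀ w, G.Adj u w → w ≠ v → Blue G S w) : Blue G S v

/-- A zero forcing set colors every vertex blue. -/
def ZeroForcing (G : SimpleGraph V) (S : Set V) : Prop := ∀ v, Blue G S v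

def MinimalZeroForcing (G : SimpleGraph V) (S : Set V) : Prop :=
  ZeroForcing G S ∧ ∀ S', ZeroForcing G S' → S' ⊆ S → S' = S

/-- A stalled set: a proper subset of the vertex set from which no color change is possible. -/
def Stalled (G : SimpleGraph V) (S : Set V) : Prop :=
  S ≠ Set.univ ∧ ∀ u ∈ S, ¬ ∃! w, w ∉ S ∧ G.Adj u w

def MaximalStalled (G : SimpleGraph V) (S : Set V) : Prop :=
  Stalled G S ∧ ∀ S', Stalled G S' → S ⊆ S' → S' = S

def FailedSet (G : SimpleGraph V) (S : Set V) : Prop := ¬ ZeroForcing G S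

def MaximalFailed (G : SimpleGraph V) (S : Set V) : Prop :=
  FailedSet G S ∧ ∀ v ∉ S, ZeroForcing G (insert v S)


lemma blue_trans {G : SimpleGraph V} {S T : Set V}
    (hST : ∀ s ∈ S, Blue G T s) {v : V} (hv : Blue G S v) : Blue G T v := by
  induction hv with
  | init h => exact hST _ h
  | force hadj hu h ihu ih => exact Blue.force hadj ihu ih

lemma stalled_closed {G : SimpleGraph V} {S : Set V}
    (hS : ∀ u ∈ S, ¬ ∃! w, w ∉ S ∧ G.Adj u w) {v : V} (hv : Blue G S v) : v ∈ S := by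
  induction hv with
  | init h => exact h
  | @force u v hadj hu h ihu ih =>
    by_contra hvS
    exact hS u ihu ⟨v, ⟨hvS, hadj⟩, fun w hw => by
      by_contra hne; exact hw.1 (ih w hw.2 hne)⟩

lemma closure_stalled {G : SimpleGraph V} {S : Set V} (h : ¬ ZeroForcing G S) :
    Stalled G {v | Blue G S v} := by
  constructor
  · intro heq
    exact h fun v => by
      have : v ∈ {v | Blue G S v} := heq ▸ Set.mem_univ v
      exact this
  · rintro u hu ⟨w, ⟨hw, hadj⟩, huniq⟩
    exact hw (Blue.force hadj hu fun x hx hne => by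
      by_contra hxB
      exact hne (huniq x ⟨hxB, hx⟩))

theorem maximalStalled_iff_maximalFailed (G : SimpleGraph V) (S : Set V) :
    MaximalStalled G S ↔ MaximalFailed G S := by
  constructor
  · rintro ⟨⟨hne, hst⟩, hmax⟩
    constructor
    · intro hzf
      exact hne (Set.eq_univ_of_forall fun v => stalled_closed hst (hzf v))
    · intro v hv
      by_contra hzf
      have hT : Stalled G {x | Blue G (insert v S) x} := closure_stalled hzf
      have hsub : S ⊆ {x | Blue G (insert v S) x} :=
        fun x hx => Blue.init (Set.mem_insert_of_mem _ hx)
      have heq := hmax _ hT hsub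
      have hvB : v ∈ {x | Blue G (insert v S) x} := Blue.init (Set.mem_insert _ _)
      rw [heq] at hvB
      exact hv hvB
  · rintro ⟨hfail, hmax⟩
    have hSne : S ≠ Set.univ := by
      intro h
      exact hfail fun v => Blue.init (h ▸ Set.mem_univ v)
    have hst : ∀ u ∈ S, ¬ ∃! w, w ∉ S ∧ G.Adj u w := by
      rintro u hu ⟨w, ⟨hw, hadj⟩, huniq⟩
      have hwB : Blue G S w := Blue.force hadj (Blue.init hu) fun x hx hne =>
        Blue.init (by by_contra hxS; exact hne (huniq x ⟨hxS, hx⟩))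
      have hzf := hmax w hw
      exact hfail fun v => blue_trans
        (fun s hs => hs.elim (fun h => h ▸ hwB) Blue.init) (hzf v)
    refine ⟨⟨hSne, hst⟩, ?_⟩
    intro S' hS' hSS'
    by_contra hne
    obtain ⟨v, hvS', hvS⟩ : ∃ v, v ∈ S' ∧ v ∉ S := by
      by_contra h
      push_neg at h
      exact hne (Set.Subset.antisymm (fun x hx => by
        by_contra hxS; exact hxS (h x hx)) hSS')
    have hzf := hmax v hvS
    apply hS'.1
    apply Set.eq_univ_of_forall
    intro x
    exact stalled_closed hS'.2 (blue_trans
      (fun s hs => Blue.init (hs.elim (fun h => h ▸ hvS') (fun h => hSS' h))) (hzf x))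
end

section
/- If v and v' are two degree-one vertices with a common neighbor (double pendants) in a graph G, and W is a minimal fort containing both v and v', then W = {v, v'}. -/
variable {V : Type*} [Fintype V] [DecidableEq V]

theorem minimalFort_of_double_pendants (G : SimpleGraph V) (v v' w : V) (hne : v ≠ v')
    (hv : G.neighborSet v = {w}) (hv' : G.neighborSet v' = {w})
    (W : Set V) (hW : MinimalFort G W) (hvW : v ∈ W) (hv'W : v' ∈ W) :
    W = {v, v'} := by
  have hadjv : G.Adj v w := by
    have : w ∈ G.neighborSet v := by rw [hv]; rfl
    exact this
  have hadjv' : G.Adj v' w := by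
    have : w ∈ G.neighborSet v' := by rw [hv']; rfl
    exact this
  have hfort : Fort G {v, v'} := by
    constructor
    · exact ⟨v, Or.inl rfl⟩
    · rintro u hu ⟨x, ⟨hxmem, hadj⟩, huniq⟩
      have key : ∀ y : V, y ∈ ({v, v'} : Set V) → G.Adj u y → u = w := by
        rintro y (rfl | rfl) h
        · have : u ∈ G.neighborSet y := h.symm
          rw [hv] at this; exact this
        · have : u ∈ G.neighborSet y := h.symm
          rw [hv'] at this; exact this
      have huw : u = w := key x hxmem hadj
      subst huw
      have h1 : v = x := huniq v ⟨Or.inl rfl, hadjv.symm⟩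
      have h2 : v' = x := huniq v' ⟨Or.inr rfl, hadjv'.symm⟩
      exact hne (h1.trans h2.symm)
  have hsub : ({v, v'} : Set V) ⊆ W := by
    rintro x (rfl | rfl)
    · exact hvW
    · exact hv'W
  exact (hW.2 _ hfort hsub).symm
end

section
/- In a path P_n with vertices v_1,...,v_n in order, the set of white vertices of the standard coloring (all vertices except the v_{2j} with 2j < n) forms a fort of minimum cardinality among all forts of P_n. -/
variable {V : Type*} [Fintype V] [DecidableEq V]

theorem standard_coloring_min_fort (n : ℕ) (hn : 1 ≤ n) :
    Fort (SimpleGraph.pathGraph n) {i : Fin n | ¬ (i.val % 2 = 1 ∧ i.val + 1 < n)} ∧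
    ∀ W : Set (Fin n), Fort (SimpleGraph.pathGraph n) W →
      ({i : Fin n | ¬ (i.val % 2 = 1 ∧ i.val + 1 < n)} : Set (Fin n)).ncard ≤ W.ncard := by
  set W₀ : Set (Fin n) := {i : Fin n | ¬ (i.val % 2 = 1 ∧ i.val + 1 < n)} with hW₀def
  constructor
  · constructor
    · exact ⟨⟨0, hn⟩, by simp [hW₀def]⟩
    · intro v hv hex
      simp only [hW₀def, Set.mem_setOf_eq, not_not] at hv
      obtain ⟨hodd, hlt⟩ := hv
      have hv1 : 1 ≤ v.val := by omega
      obtain ⟨w, _, huni⟩ := hex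
      have h1 : (⟨v.val - 1, by omega⟩ : Fin n) = w := by
        apply huni
        constructor
        · simp only [hW₀def, Set.mem_setOf_eq]; omega
        · rw [SimpleGraph.pathGraph_adj]; right; simp; omega
      have h2 : (⟨v.val + 1, hlt⟩ : Fin n) = w := by
        apply huni
        constructor
        · simp only [hW₀def, Set.mem_setOf_eq]; omega
        · rw [SimpleGraph.pathGraph_adj]; left; simp
      rw [← h2] at h1
      have := congrArg Fin.val h1
      simp at this
  · intro W hW
    obtain ⟨hWne, hWfort⟩ := hW
    set m : ℕ → Prop := fun k => ∃ h : k < n, (⟨k, h⟩ : Fin n) ∈ W with hmdef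
    -- right step
    have L1 : ∀ k, ¬ m k → ¬ m (k + 1) → ¬ m (k + 2) := by
      intro k hk hk1 hk2
      obtain ⟨h2, hw2⟩ := hk2
      apply hWfort ⟨k + 1, by omega⟩
      · intro hmem; exact hk1 ⟨by omega, hmem⟩
      · refine ⟨⟨k + 2, h2⟩, ⟨hw2, ?_⟩, ?_⟩
        · rw [SimpleGraph.pathGraph_adj]; left; simp
        · rintro w ⟨hwW, hadj⟩
          rw [SimpleGraph.pathGraph_adj] at hadj
          simp at hadj
          apply Fin.ext
          simp
          rcases hadj with h | h
          · omega
          · exfalso; exact hk ⟨by omega, by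
              have : w = (⟨k, by omega⟩ : Fin n) := Fin.ext (by simp only [Fin.val_mk]; omega)
              rwa [this] at hwW⟩
    -- left step
    have L2 : ∀ k, k + 1 < n → ¬ m (k + 1) → ¬ m (k + 2) → ¬ m k := by
      intro k hkn hk1 hk2 hk
      obtain ⟨h0, hw0⟩ := hk
      apply hWfort ⟨k + 1, hkn⟩
      · intro hmem; exact hk1 ⟨hkn, hmem⟩
      · refine ⟨⟨k, h0⟩, ⟨hw0, ?_⟩, ?_⟩
        · rw [SimpleGraph.pathGraph_adj]; right; simp
        · rintro w ⟨hwW, hadj⟩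
          rw [SimpleGraph.pathGraph_adj] at hadj
          simp at hadj
          apply Fin.ext
          simp
          rcases hadj with h | h
          · exfalso; exact hk2 ⟨by omega, by
              have : w = (⟨k + 2, by omega⟩ : Fin n) := Fin.ext (by simp only [Fin.val_mk]; omega)
              rwa [this] at hwW⟩
          · omega
    -- two adjacent missing vertices kill everything
    have Lpair : ∀ k, k + 1 < n → m k ∨ m (k + 1) := by
      intro k hkn
      by_contra hc
      push_neg at hc
      obtain ⟨hk, hk1⟩ := hc
      have hup : ∀ d, ¬ m (k + d) ∧ ¬ m (k + d + 1) := by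
        intro d
        induction d with
        | zero => exact ⟨hk, hk1⟩
        | succ d ih =>
          constructor
          · have h : k + (d + 1) = k + d + 1 := by omega
            rw [h]; exact ih.2
          · have h : k + (d + 1) + 1 = k + d + 2 := by omega
            rw [h]; exact L1 (k + d) ih.1 ih.2
      have hdown : ∀ d, ¬ m (k - d) ∧ ¬ m (k - d + 1) := by
        intro d
        induction d with
        | zero => exact ⟨hk, hk1⟩
        | succ d ih =>
          by_cases hkd : d < k
          · have h1 : k - (d + 1) + 1 = k - d := by omega
            have h2 : k - (d + 1) + 2 = k - d + 1 := by omega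
            refine ⟨?_, by rw [h1]; exact ih.1⟩
            apply L2 (k - (d + 1)) (by omega)
            · rw [h1]; exact ih.1
            · rw [h2]; exact ih.2
          · have : k - (d + 1) = k - d := by omega
            rw [this]; exact ih
      obtain ⟨w, hw⟩ := hWne
      have hmw : m w.val := ⟨w.isLt, by simpa using hw⟩
      rcases le_or_gt w.val k with h | h
      · exact (hdown (k - w.val)).1 (by simpa [Nat.sub_sub_self h] using hmw)
      · have : w.val = k + (w.val - k) := by omega
        exact (hup (w.val - k)).1 (by rwa [← this])
    -- endpoints
    have Lzero : m 0 := by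
      by_contra h0
      rcases Nat.lt_or_ge 1 n with h2 | h2
      · have h1 : m 1 := (Lpair 0 h2).resolve_left h0
        obtain ⟨hlt, hw1⟩ := h1
        apply hWfort ⟨0, by omega⟩
        · intro hmem; exact h0 ⟨by omega, hmem⟩
        · refine ⟨⟨1, hlt⟩, ⟨hw1, ?_⟩, ?_⟩
          · rw [SimpleGraph.pathGraph_adj]; left; simp
          · rintro w ⟨hwW, hadj⟩
            rw [SimpleGraph.pathGraph_adj] at hadj
            simp at hadj
            exact Fin.ext (by simp only [Fin.val_mk]; omega)
      · obtain ⟨w, hw⟩ := hWne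
        have : w.val = 0 := by omega
        exact h0 ⟨by omega, by
          have hwe : w = (⟨0, by omega⟩ : Fin n) := Fin.ext this
          rwa [hwe] at hw⟩
    have Llast : m (n - 1) := by
      by_contra hl
      rcases Nat.lt_or_ge 1 n with h2 | h2
      · have hp : m (n - 2) := by
          have := Lpair (n - 2) (by omega)
          have heq : n - 2 + 1 = n - 1 := by omega
          rw [heq] at this
          exact this.resolve_right hl
        obtain ⟨hlt, hw1⟩ := hp
        apply hWfort ⟨n - 1, by omega⟩
        · intro hmem; exact hl ⟨by omega, hmem⟩
        · refine ⟨⟨n - 2, hlt⟩, ⟨hw1, ?_⟩, ?_⟩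
          · rw [SimpleGraph.pathGraph_adj]; right; simp; omega
          · rintro w ⟨hwW, hadj⟩
            rw [SimpleGraph.pathGraph_adj] at hadj
            simp at hadj
            have hwlt := w.isLt
            exact Fin.ext (by simp only [Fin.val_mk]; omega)
      · obtain ⟨w, hw⟩ := hWne
        have : w.val = n - 1 := by omega
        exact hl ⟨by omega, by
          have hwe : w = (⟨n - 1, by omega⟩ : Fin n) := Fin.ext this
          rwa [hwe] at hw⟩
    -- counting
    set g : Fin n → ℕ := fun i => (i.val + 1) / 2 with hgdef
    have hinj : Set.InjOn g W₀ := by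
      intro a ha b hb hab
      simp only [hW₀def, Set.mem_setOf_eq, not_and, not_lt] at ha hb
      simp only [hgdef] at hab
      have := a.isLt; have := b.isLt
      exact Fin.ext (by omega)
    have hsub : g '' W₀ ⊆ g '' W := by
      rintro y ⟨x, hx, rfl⟩
      simp only [hW₀def, Set.mem_setOf_eq, not_and, not_lt] at hx
      have hxlt := x.isLt
      rcases Nat.even_or_odd x.val with he | ho
      · rcases Nat.eq_zero_or_pos x.val with h0 | hpos
        · obtain ⟨h, hw⟩ := Lzero
          exact ⟨⟨0, h⟩, hw, by simp [hgdef, h0]⟩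
        · have hx2 : x.val % 2 = 0 := by
            rcases he with ⟨r, hr⟩; omega
          rcases Lpair (x.val - 1) (by omega) with hm | hm
          · obtain ⟨h, hw⟩ := hm
            exact ⟨⟨x.val - 1, h⟩, hw, by simp [hgdef]; omega⟩
          · obtain ⟨h, hw⟩ := hm
            exact ⟨⟨x.val - 1 + 1, h⟩, hw, by simp [hgdef]; omega⟩
      · have hx2 : x.val % 2 = 1 := by
          rcases ho with ⟨r, hr⟩; omega
        have hxl : x.val = n - 1 := by have := hx hx2; omega
        obtain ⟨h, hw⟩ := Llast
        exact ⟨⟨n - 1, h⟩, hw, by simp [hgdef, hxl]⟩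
    calc W₀.ncard = (g '' W₀).ncard := (Set.ncard_image_of_injOn hinj).symm
      _ ≤ (g '' W).ncard := Set.ncard_le_ncard hsub (Set.toFinite _)
      _ ≤ W.ncard := Set.ncard_image_le (Set.toFinite _)
end

section
/- The path P_n is well-failed (every minimal fort is a minimum fort, equivalently every maximal failed zero forcing set is a maximum failed set) if and only if n ∈ {1, 2, 3, 4, 6}. -/
variable {V : Type*} [Fintype V] [DecidableEq V]

namespace PathWF

open SimpleGraph

variable {n : ℕ}

def memP (n : ℕ) (W : Set (Fin n)) (i : ℕ) : Prop :=
  ∀ h : i < n, (⟨i, h⟩ : Fin n) ∈ W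

lemma memP_val {W : Set (Fin n)} (v : Fin n) : memP n W v.val ↔ v ∈ W := by
  constructor
  · intro h; simpa using h v.isLt
  · intro h _; simpa using h

lemma not_memP_iff {W : Set (Fin n)} {x : ℕ} (hx : x < n) :
    ¬ memP n W x ↔ (⟨x, hx⟩ : Fin n) ∉ W := by
  simp only [memP, not_forall]
  constructor
  · rintro ⟨h, hm⟩; exact hm
  · intro h; exact ⟨hx, h⟩

lemma step_up {W : Set (Fin n)} (hF : Fort (pathGraph n) W) {j : ℕ} (hj1 : j + 1 < n)
    (h0 : ¬ memP n W j) (hleft : j = 0 ∨ ¬ memP n W (j - 1)) : ¬ memP n W (j + 1) := by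
  intro hmem
  have hjn : j < n := by omega
  refine hF.2 ⟨j, hjn⟩ ((not_memP_iff hjn).1 h0)
    ⟨⟨j + 1, hj1⟩, ⟨hmem hj1, ?_⟩, ?_⟩
  · rw [pathGraph_adj]; left; rfl
  · rintro u ⟨huW, hadj⟩
    rw [pathGraph_adj] at hadj
    rcases hadj with h | h
    · exact Fin.ext (by simp at h ⊢; omega)
    · exfalso
      simp only [Fin.val_mk] at h
      rcases hleft with h0' | h0'
      · omega
      · have hlt : j - 1 < n := by omega
        apply (not_memP_iff hlt).1 h0'
        have : u = (⟨j - 1, hlt⟩ : Fin n) := Fin.ext (by simp; omega)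
        rwa [this] at huW

lemma step_down {W : Set (Fin n)} (hF : Fort (pathGraph n) W) {j : ℕ} (hj : j < n)
    (hj1 : 1 ≤ j) (h0 : ¬ memP n W j) (hright : j = n - 1 ∨ ¬ memP n W (j + 1)) :
    ¬ memP n W (j - 1) := by
  intro hmem
  have hlt : j - 1 < n := by omega
  refine hF.2 ⟨j, hj⟩ ((not_memP_iff hj).1 h0)
    ⟨⟨j - 1, hlt⟩, ⟨hmem hlt, ?_⟩, ?_⟩
  · rw [pathGraph_adj]; right; simp; omega
  · rintro u ⟨huW, hadj⟩
    rw [pathGraph_adj] at hadj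
    rcases hadj with h | h
    · exfalso
      simp only [Fin.val_mk] at h
      rcases hright with h0' | h0'
      · have := u.isLt; omega
      · have hlt2 : j + 1 < n := by have := u.isLt; omega
        apply (not_memP_iff hlt2).1 h0'
        have : u = (⟨j + 1, hlt2⟩ : Fin n) := Fin.ext (by simp; omega)
        rwa [this] at huW
    · exact Fin.ext (by simp at h ⊢; omega)

lemma up_all {W : Set (Fin n)} (hF : Fort (pathGraph n) W) {i : ℕ}
    (h0 : ¬ memP n W i) (hleft : i = 0 ∨ ¬ memP n W (i - 1)) :
    ∀ j, i ≤ j → j < n → ¬ memP n W j := by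
  intro j
  induction j using Nat.strong_induction_on with
  | _ j ih =>
    intro hij hjn
    rcases Nat.lt_or_ge j (i + 1) with h | h
    · have : j = i := by omega
      subst this; exact h0
    · rcases Nat.lt_or_ge j (i + 2) with h2 | h2
      · have hji : j = i + 1 := by omega
        subst hji
        exact step_up hF hjn h0 hleft
      · have ha := ih (j - 1) (by omega) (by omega) (by omega)
        have hb := ih (j - 2) (by omega) (by omega) (by omega)
        have hres := step_up hF (show (j - 1) + 1 < n by omega) ha (Or.inr hb)
        have e : j - 1 + 1 = j := by omega
        rwa [e] at hres

lemma down_all {W : Set (Fin n)} (hF : Fort (pathGraph n) W) {i : ℕ} (hi : i < n)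
    (h0 : ¬ memP n W i) (hright : i = n - 1 ∨ ¬ memP n W (i + 1)) :
    ∀ j, j ≤ i → ¬ memP n W j := by
  intro j hji
  have key : ∀ d, d ≤ i → ¬ memP n W (i - d) := by
    intro d
    induction d using Nat.strong_induction_on with
    | _ d ih =>
      intro hdi
      rcases Nat.eq_zero_or_pos d with h | h
      · subst h; simpa using h0
      · rcases Nat.lt_or_ge d 2 with h2 | h2
        · have : d = 1 := by omega
          subst this
          exact step_down hF hi (by omega) h0 hright
        · have ha := ih (d - 1) (by omega) (by omega)
          have hb := ih (d - 2) (by omega) (by omega)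
          have hres := step_down hF (show i - (d - 1) < n by omega) (by omega) ha
            (Or.inr (by rw [show i - (d - 1) + 1 = i - (d - 2) from by omega]; exact hb))
          have e : i - (d - 1) - 1 = i - d := by omega
          rwa [e] at hres
  have := key (i - j) (by omega)
  have e : i - (i - j) = j := by omega
  rwa [e] at this

lemma fort_iff {W : Set (Fin n)} (hn : 1 ≤ n) :
    Fort (pathGraph n) W ↔
      memP n W 0 ∧ memP n W (n - 1) ∧
      ∀ i, i + 1 < n → ¬ memP n W i → memP n W (i + 1) := by
  constructor
  · intro hF
    have h0 : memP n W 0 := by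
      by_contra h0
      have hall := up_all hF h0 (Or.inl rfl)
      obtain ⟨v, hv⟩ := hF.1
      exact hall v.val (Nat.zero_le _) v.isLt ((memP_val v).2 hv)
    have hl : memP n W (n - 1) := by
      by_contra hl
      have hall := down_all hF (by omega) hl (Or.inl rfl)
      obtain ⟨v, hv⟩ := hF.1
      exact hall v.val (by have := v.isLt; omega) ((memP_val v).2 hv)
    refine ⟨h0, hl, ?_⟩
    intro i hi1 hiW
    by_contra hsucc
    have hup := up_all hF hsucc (Or.inr (by simpa using hiW)) 
    have hdown := down_all hF (by omega) hiW (Or.inr hsucc)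
    obtain ⟨v, hv⟩ := hF.1
    rcases Nat.lt_or_ge v.val (i + 1) with h | h
    · exact hdown v.val (by omega) ((memP_val v).2 hv)
    · exact hup v.val h v.isLt ((memP_val v).2 hv)
  · rintro ⟨h0, hl, hc⟩
    constructor
    · exact ⟨⟨0, by omega⟩, h0 (by omega)⟩
    · rintro v hv ⟨w, ⟨hwW, hadj⟩, huniq⟩
      have hv0 : v.val ≠ 0 := by
        intro h
        exact hv (by have : v = ⟨0, by omega⟩ := Fin.ext h; rw [this]; exact h0 (by omega))
      have hvl : v.val ≠ n - 1 := by
        intro h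
        exact hv (by have : v = ⟨n - 1, by omega⟩ := Fin.ext h; rw [this]; exact hl (by omega))
      have hvlt := v.isLt
      have hnm : ¬ memP n W v.val := fun hm => hv ((memP_val v).1 hm)
      have hA : memP n W (v.val + 1) := hc v.val (by omega) hnm
      have hB : memP n W (v.val - 1) := by
        by_contra hB
        have := hc (v.val - 1) (by omega) hB
        have e : v.val - 1 + 1 = v.val := by omega
        rw [e] at this
        exact hnm this
      have ha : (⟨v.val - 1, by omega⟩ : Fin n) = w := by
        apply huniq
        refine ⟨hB (by omega), ?_⟩
        rw [pathGraph_adj]; right; simp; omega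
      have hb : (⟨v.val + 1, by omega⟩ : Fin n) = w := by
        apply huniq
        refine ⟨hA (by omega), ?_⟩
        rw [pathGraph_adj]; exact Or.inl (by simp)
      rw [← hb] at ha
      have := congrArg Fin.val ha
      simp at this

lemma memP_mono {W W' : Set (Fin n)} (h : W' ⊆ W) {x : ℕ} (hm : memP n W' x) :
    memP n W x := fun hx => h (hm hx)

lemma minimal_of {W : Set (Fin n)} (hn : 1 ≤ n) (hF : Fort (pathGraph n) W)
    (hmin : ∀ i, 1 ≤ i → i + 1 < n → memP n W i →
      (¬ memP n W (i - 1) ∨ ¬ memP n W (i + 1))) :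
    MinimalFort (pathGraph n) W := by
  refine ⟨hF, ?_⟩
  intro W'' hF'' hsub
  obtain ⟨h0, hl, hc⟩ := (fort_iff hn).1 hF''
  apply Set.Subset.antisymm hsub
  intro v hvW
  by_contra hv
  have hv0 : v.val ≠ 0 := by
    intro h
    exact hv (by have : v = ⟨0, by omega⟩ := Fin.ext h; rw [this]; exact h0 (by omega))
  have hvl : v.val ≠ n - 1 := by
    intro h
    exact hv (by have : v = ⟨n - 1, by omega⟩ := Fin.ext h; rw [this]; exact hl (by omega))
  have hvlt := v.isLt
  have hnm : ¬ memP n W'' v.val := fun hm => hv ((memP_val v).1 hm)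
  rcases hmin v.val (by omega) (by omega) ((memP_val v).2 hvW) with h | h
  · have h' : ¬ memP n W'' (v.val - 1) := fun hm => h (memP_mono hsub hm)
    have := hc (v.val - 1) (by omega) h'
    rw [show v.val - 1 + 1 = v.val from by omega] at this
    exact hnm this
  · have h' : ¬ memP n W'' (v.val + 1) := fun hm => h (memP_mono hsub hm)
    exact h' (hc v.val (by omega) hnm)

lemma minimal_interior {W : Set (Fin n)} (hn : 1 ≤ n)
    (hM : MinimalFort (pathGraph n) W) :
    ∀ i, 1 ≤ i → i + 1 < n → memP n W i →
      (¬ memP n W (i - 1) ∨ ¬ memP n W (i + 1)) := by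
  intro i hi1 hi2 hiW
  by_contra hcon
  push_neg at hcon
  obtain ⟨hm1, hm2⟩ := hcon
  obtain ⟨h0, hl, hc⟩ := (fort_iff hn).1 hM.1
  set W₂ : Set (Fin n) := W \ {⟨i, by omega⟩} with hW₂
  have hforts : Fort (pathGraph n) W₂ := by
    rw [fort_iff hn]
    refine ⟨?_, ?_, ?_⟩
    · intro h
      refine ⟨h0 h, ?_⟩
      simp only [Set.mem_singleton_iff]
      intro he
      have := congrArg Fin.val he
      simp at this
      omega
    · intro h
      refine ⟨hl h, ?_⟩
      simp only [Set.mem_singleton_iff]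
      intro he
      have := congrArg Fin.val he
      simp at this
      omega
    · intro j hj hjW₂
      by_cases hji : j = i
      · subst hji
        intro h
        refine ⟨hm2 h, ?_⟩
        simp only [Set.mem_singleton_iff]
        intro he
        have := congrArg Fin.val he
        simp at this
      · have hjW : ¬ memP n W j := by
          intro hm
          apply hjW₂
          intro h
          refine ⟨hm h, ?_⟩
          simp only [Set.mem_singleton_iff]
          intro he
          have := congrArg Fin.val he
          simp at this
          omega
        by_cases hji1 : j + 1 = i
        · exfalso
          apply hjW
          rw [show j = i - 1 from by omega]
          exact hm1
        · intro h
          refine ⟨hc j hj hjW h, ?_⟩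
          simp only [Set.mem_singleton_iff]
          intro he
          have := congrArg Fin.val he
          simp at this
          omega
  have heq := hM.2 W₂ hforts Set.diff_subset
  have : (⟨i, by omega⟩ : Fin n) ∈ W₂ := heq ▸ hiW (by omega)
  exact this.2 rfl

lemma ncard_le_of_inj {W : Set (Fin n)} (k : ℕ) (f : Fin n → ℕ)
    (hmap : ∀ v ∈ W, f v < k) (hinj : ∀ v ∈ W, ∀ u ∈ W, f v = f u → v = u) :
    W.ncard ≤ k := by
  classical
  rw [Set.ncard_eq_toFinset_card W W.toFinite]
  refine le_trans (Finset.card_le_card_of_injOn f (t := Finset.range k) ?_ ?_) (by simp)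
  · intro a ha
    rw [Finset.mem_coe, Set.Finite.mem_toFinset] at ha
    simpa using hmap a ha
  · intro a ha b hb hf
    rw [Set.Finite.coe_toFinset] at ha hb
    exact hinj a ha b hb hf

lemma fort_card_lb {W : Set (Fin n)} (hn : 1 ≤ n) (hF : Fort (pathGraph n) W) :
    n ≤ W.ncard + (n - 1) / 2 := by
  obtain ⟨h0, hl, hc⟩ := (fort_iff hn).1 hF
  have hcompl : Wᶜ.ncard ≤ (n - 1) / 2 := by
    apply ncard_le_of_inj ((n - 1) / 2) (fun v => (v.val - 1) / 2)
    · intro v hv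
      have hvlt := v.isLt
      have hv0 : v.val ≠ 0 := by
        intro h
        exact hv (by have : v = ⟨0, by omega⟩ := Fin.ext h; rw [this]; exact h0 (by omega))
      have hvl : v.val ≠ n - 1 := by
        intro h
        exact hv (by have : v = ⟨n - 1, by omega⟩ := Fin.ext h; rw [this]; exact hl (by omega))
      omega
    · intro v hv u hu hf
      have hvlt := v.isLt
      have hult := u.isLt
      have hv0 : v.val ≠ 0 := by
        intro h
        exact hv (by have : v = ⟨0, by omega⟩ := Fin.ext h; rw [this]; exact h0 (by omega))
      have hu0 : u.val ≠ 0 := by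
        intro h
        exact hu (by have : u = ⟨0, by omega⟩ := Fin.ext h; rw [this]; exact h0 (by omega))
      have hnocon : ∀ a b : Fin n, a ∈ Wᶜ → b ∈ Wᶜ → a.val + 1 = b.val → False := by
        intro a b ha hb hab
        have hna : ¬ memP n W a.val := fun hm => ha ((memP_val a).1 hm)
        have := hc a.val (by have := b.isLt; omega) hna
        rw [hab] at this
        exact hb ((memP_val b).1 this)
      rcases Nat.lt_trichotomy v.val u.val with h | h | h
      · exfalso
        exact hnocon v u hv hu (by omega)
      · exact Fin.ext h
      · exfalso
        exact hnocon u v hu hv (by omega)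
  have := Set.ncard_add_ncard_compl W
  rw [Nat.card_eq_fintype_card, Fintype.card_fin] at this
  omega

lemma minfort_card_ub {W : Set (Fin n)} (hn : 1 ≤ n)
    (hM : MinimalFort (pathGraph n) W) : 3 * W.ncard ≤ 2 * n + 2 := by
  classical
  obtain ⟨h0, hl, hc⟩ := (fort_iff hn).1 hM.1
  have hint := minimal_interior hn hM
  set s : Finset (Fin n) := W.toFinite.toFinset with hs_def
  have hs : W.ncard = s.card := Set.ncard_eq_toFinset_card W W.toFinite
  set pr : Finset (Fin n) := {⟨0, by omega⟩, ⟨n - 1, by omega⟩} with hpr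
  have hs2 : s.card ≤ (s \ pr).card + 2 := by
    refine le_trans (Finset.card_le_card_sdiff_add_card (t := pr)) ?_
    have : pr.card ≤ 2 := by
      apply le_trans (Finset.card_insert_le _ _)
      simp
    omega
  set f : Fin n → Fin n × Bool := fun v =>
    if h : v.val + 1 < n ∧ ¬ memP n W (v.val + 1) then (⟨v.val + 1, h.1⟩, true)
    else (⟨v.val - 1, by have := v.isLt; omega⟩, false) with hf_def
  have key : (s \ pr).card ≤ (sᶜ ×ˢ (Finset.univ : Finset Bool)).card := by
    apply Finset.card_le_card_of_injOn f
    · intro v hv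
      simp only [Finset.mem_coe, Finset.mem_sdiff, hpr, Finset.mem_insert, Finset.mem_singleton] at hv
      obtain ⟨hvs, hvne⟩ := hv
      push_neg at hvne
      have hvW : v ∈ W := by rwa [Set.Finite.mem_toFinset] at hvs
      have hvlt := v.isLt
      have hv1 : 1 ≤ v.val := by
        rcases Nat.eq_zero_or_pos v.val with h | h
        · exact absurd (Fin.ext h : v = ⟨0, by omega⟩) hvne.1
        · exact h
      have hv2 : v.val + 1 < n := by
        rcases Nat.lt_or_ge (v.val + 1) n with h | h
        · exact h
        · exact absurd (Fin.ext (show v.val = n - 1 by omega)) hvne.2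
      rcases hint v.val hv1 hv2 ((memP_val v).2 hvW) with hcase | hcase
      · -- left gap; the dite may still pick right gap if it exists
        simp only [hf_def]
        split_ifs with h
        · simp only [Finset.mem_coe, Finset.mem_product, Finset.mem_compl, Finset.mem_univ, and_true]
          rw [Set.Finite.mem_toFinset]
          exact (not_memP_iff h.1).1 h.2
        · simp only [Finset.mem_coe, Finset.mem_product, Finset.mem_compl, Finset.mem_univ, and_true]
          rw [Set.Finite.mem_toFinset]
          exact (not_memP_iff (by omega)).1 hcase
      · simp only [hf_def]
        split_ifs with h
        · simp only [Finset.mem_coe, Finset.mem_product, Finset.mem_compl, Finset.mem_univ, and_true]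
          rw [Set.Finite.mem_toFinset]
          exact (not_memP_iff h.1).1 h.2
        · exact absurd ⟨hv2, hcase⟩ h
    · intro a ha b hb hab
      rw [Finset.mem_coe, Finset.mem_sdiff] at ha hb
      have hane := ha.2
      have hbne := hb.2
      simp only [hpr, Finset.mem_insert, Finset.mem_singleton, not_or] at hane hbne
      have ha1 : 1 ≤ a.val := by
        by_contra h
        exact hane.1 (Fin.ext (show a.val = 0 by omega))
      have hb1 : 1 ≤ b.val := by
        by_contra h
        exact hbne.1 (Fin.ext (show b.val = 0 by omega))
      simp only [hf_def] at hab
      split_ifs at hab with h1 h2 h2 <;>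
        · simp only [Prod.mk.injEq] at hab
          first
          | (exact Fin.ext (by have := congrArg Fin.val hab.1; simp at this; omega))
          | (exact absurd hab.2 (by simp))
  have hcard : (sᶜ ×ˢ (Finset.univ : Finset Bool)).card = sᶜ.card * 2 := by
    rw [Finset.card_product, Finset.card_univ, Fintype.card_bool]
  have hcompl : s.card + sᶜ.card = n := by
    rw [Finset.card_add_card_compl, Fintype.card_fin]
  omega

theorem main (n : ℕ) (hn : 1 ≤ n) :
    (∀ W : Set (Fin n), MinimalFort (SimpleGraph.pathGraph n) W →
      ∀ W' : Set (Fin n), Fort (SimpleGraph.pathGraph n) W' → W.ncard ≤ W'.ncard) ↔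
    n ∈ ({1, 2, 3, 4, 6} : Set ℕ) := by
  constructor
  · intro h
    by_contra hmem
    simp only [Set.mem_insert_iff, Set.mem_singleton_iff, not_or] at hmem
    set r : ℕ := if n % 3 = 0 then 1 else 2 with hr_def
    have hr : (r = 1 ∧ n % 3 = 0) ∨ (r = 2 ∧ n % 3 ≠ 0) := by
      by_cases h3 : n % 3 = 0 <;> simp [hr_def, h3]
    set W : Set (Fin n) := {v | v.val % 3 ≠ r} with hW_def
    set W' : Set (Fin n) := {v | v.val % 2 = 0 ∨ v.val = n - 1} with hW'_def
    have hmemW : ∀ x (hx : x < n), memP n W x ↔ x % 3 ≠ r := by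
      intro x hx
      constructor
      · intro hm
        have := hm hx
        simpa [hW_def] using this
      · intro hx3 hh
        simp only [hW_def, Set.mem_setOf_eq]
        simpa using hx3
    have hmemW' : ∀ x (hx : x < n), memP n W' x ↔ (x % 2 = 0 ∨ x = n - 1) := by
      intro x hx
      constructor
      · intro hm
        have := hm hx
        simpa [hW'_def] using this
      · intro hx2 hh
        simp only [hW'_def, Set.mem_setOf_eq]
        simpa using hx2
    have hFW : Fort (SimpleGraph.pathGraph n) W := by
      rw [fort_iff hn]
      refine ⟨?_, ?_, ?_⟩
      · rw [hmemW 0 (by omega)]; omega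
      · rw [hmemW (n - 1) (by omega)]; omega
      · intro i hi hni
        rw [hmemW i (by omega)] at hni
        rw [hmemW (i + 1) (by omega)]
        push_neg at hni
        omega
    have hMW : MinimalFort (SimpleGraph.pathGraph n) W := by
      apply minimal_of hn hFW
      intro i h1 h2 hmi
      rw [hmemW i (by omega)] at hmi
      have hd : (i - 1) % 3 = r ∨ (i + 1) % 3 = r := by omega
      rcases hd with hcase | hcase
      · left; rw [hmemW _ (by omega)]; omega
      · right; rw [hmemW _ (by omega)]; omega
    have hFW' : Fort (SimpleGraph.pathGraph n) W' := by
      rw [fort_iff hn]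
      refine ⟨?_, ?_, ?_⟩
      · rw [hmemW' 0 (by omega)]; omega
      · rw [hmemW' (n - 1) (by omega)]; omega
      · intro i hi hni
        rw [hmemW' i (by omega)] at hni
        rw [hmemW' (i + 1) (by omega)]
        push_neg at hni
        omega
    have hub : W'.ncard ≤ n / 2 + 1 := by
      apply ncard_le_of_inj _ (fun v => (v.val + 1) / 2)
      · intro v hv
        have hvlt := v.isLt
        have hv' : v.val % 2 = 0 ∨ v.val = n - 1 := by simpa [hW'_def] using hv
        omega
      · intro v hv u hu hf
        have h1 := v.isLt
        have h2 := u.isLt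
        have hv' : v.val % 2 = 0 ∨ v.val = n - 1 := by simpa [hW'_def] using hv
        have hu' : u.val % 2 = 0 ∨ u.val = n - 1 := by simpa [hW'_def] using hu
        exact Fin.ext (by omega)
    have hlb : n ≤ W.ncard + n / 3 := by
      have hcompl : Wᶜ.ncard ≤ n / 3 := by
        apply ncard_le_of_inj _ (fun v => v.val / 3)
        · intro v hv
          have h1 := v.isLt
          have hv3 : v.val % 3 = r := by
            simpa [hW_def, Set.mem_compl_iff] using hv
          omega
        · intro v hv u hu hf
          have hv3 : v.val % 3 = r := by
            simpa [hW_def, Set.mem_compl_iff] using hv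
          have hu3 : u.val % 3 = r := by
            simpa [hW_def, Set.mem_compl_iff] using hu
          exact Fin.ext (by omega)
      have hcc := Set.ncard_add_ncard_compl W
      rw [Nat.card_eq_fintype_card, Fintype.card_fin] at hcc
      omega
    have hle := h W hMW W' hFW'
    omega
  · intro hmem W hMW W' hFW'
    have h1 := minfort_card_ub hn hMW
    have h2 := fort_card_lb hn hFW'
    simp only [Set.mem_insert_iff, Set.mem_singleton_iff] at hmem
    omega

end PathWF

theorem path_wellFailed_iff (n : ℕ) (hn : 1 ≤ n) :
    (∀ W : Set (Fin n), MinimalFort (SimpleGraph.pathGraph n) W →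
      ∀ W' : Set (Fin n), Fort (SimpleGraph.pathGraph n) W' → W.ncard ≤ W'.ncard) ↔
    n ∈ ({1, 2, 3, 4, 6} : Set ℕ) := PathWF.main n hn
end

section
/- If S is a minimal zero forcing set of G and W is a fort of G, then S ∩ W is nonempty. -/
variable {V : Type*} [Fintype V] [DecidableEq V]

theorem minimalZeroForcing_inter_fort_nonempty (G : SimpleGraph V) (S W : Set V)
    (hS : MinimalZeroForcing G S) (hW : Fort G W) :
    (S ∩ W).Nonempty := by
  by_contra hempty
  rw [Set.not_nonempty_iff_eq_empty] at hempty
  have key : ∀ v, Blue G S v → v ∉ W := by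
    intro v hv
    induction hv with
    | @init v h =>
      intro hvW
      exact absurd (Set.mem_inter h hvW) (by simp [hempty])
    | @force u v hadj hu h ihu ih =>
      intro hvW
      exact hW.2 u ihu ⟨v, ⟨hvW, hadj⟩, fun w ⟨hwW, hadjw⟩ => by
        by_contra hne
        exact ih w hadjw hne hwW⟩
  obtain ⟨w, hw⟩ := hW.1
  exact key w (hS.1 w) hw
end

section
/- A set S ⊆ V(G) is a minimal zero forcing set of G if and only if S is a minimal cover of the collection of minimal forts of G (i.e., S intersects every minimal fort, and no proper subset of S does). -/
variable {V : Type*} [Fintype V] [DecidableEq V]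

/-- A cover of the minimal forts of `G`: a set meeting every minimal fort. -/
def CoverOfMinimalForts (G : SimpleGraph V) (C : Set V) : Prop :=
  ∀ W, MinimalFort G W → (C ∩ W).Nonempty

lemma blue_notMem_fort {G : SimpleGraph V} {S W : Set V} (hfort : Fort G W)
    (hdisj : ∀ s ∈ S, s ∉ W) {v : V} (hb : Blue G S v) : v ∉ W := by
  induction hb with
  | init h => exact hdisj _ h
  | force hadj hu h ihu ih =>
    intro hvW
    exact hfort.2 _ ihu ⟨_, ⟨hvW, hadj⟩, by
      rintro y ⟨hyW, hy⟩
      by_contra hne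
      exact ih y hy hne hyW⟩

lemma zeroForcing_iff_cover_forts {G : SimpleGraph V} {S : Set V} :
    ZeroForcing G S ↔ ∀ W, Fort G W → (S ∩ W).Nonempty := by
  constructor
  · intro hzf W hW
    by_contra hne
    rw [Set.not_nonempty_iff_eq_empty] at hne
    obtain ⟨w, hw⟩ := hW.1
    exact blue_notMem_fort hW
      (fun s hs hsW => (Set.eq_empty_iff_forall_notMem.mp hne s) ⟨hs, hsW⟩)
      (hzf w) hw
  · intro hcov
    by_contra hzf
    simp only [ZeroForcing, not_forall] at hzf
    obtain ⟨v, hv⟩ := hzf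
    have hfort : Fort G {x | ¬ Blue G S x} := by
      refine ⟨⟨v, hv⟩, ?_⟩
      intro u hu
      simp only [Set.mem_setOf_eq, not_not] at hu
      rintro ⟨w, ⟨hwW, hadj⟩, huniq⟩
      exact hwW (Blue.force hadj hu (fun x hx hxne => by
        by_contra hxb
        exact hxne (huniq x ⟨hxb, hx⟩)))
    obtain ⟨s, hsS, hsW⟩ := hcov _ hfort
    exact hsW (Blue.init hsS)

lemma exists_minimalFort {G : SimpleGraph V} {W : Set V} (h : Fort G W) :
    ∃ W', W' ⊆ W ∧ MinimalFort G W' := by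
  suffices H : ∀ n (W : Set V), W.ncard = n → Fort G W →
      ∃ W', W' ⊆ W ∧ MinimalFort G W' from H _ W rfl h
  intro n
  induction n using Nat.strong_induction_on with
  | _ n ih =>
    intro W hn hW
    by_cases hm : MinimalFort G W
    · exact ⟨W, subset_rfl, hm⟩
    · simp only [MinimalFort, not_and, not_forall] at hm
      obtain ⟨W', hW', hsub, hne⟩ := hm hW
      subst hn
      have hlt : W'.ncard < W.ncard :=
        Set.ncard_lt_ncard (ssubset_of_subset_of_ne hsub hne) (Set.toFinite W)
      obtain ⟨W'', hsub'', hmin⟩ := ih _ hlt W' rfl hW'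
      exact ⟨W'', hsub''.trans hsub, hmin⟩

lemma zeroForcing_iff_coverMinimal {G : SimpleGraph V} {S : Set V} :
    ZeroForcing G S ↔ CoverOfMinimalForts G S := by
  rw [zeroForcing_iff_cover_forts]
  constructor
  · intro h W hW; exact h W hW.1
  · intro h W hW
    obtain ⟨W', hsub, hmin⟩ := exists_minimalFort hW
    obtain ⟨s, hs, hsW⟩ := h W' hmin
    exact ⟨s, hs, hsub hsW⟩

theorem minimalZeroForcing_iff_minimalCover (G : SimpleGraph V) (S : Set V) :
    MinimalZeroForcing G S ↔
      (CoverOfMinimalForts G S ∧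
        ∀ C, CoverOfMinimalForts G C → C ⊆ S → C = S) := by
  unfold MinimalZeroForcing
  constructor
  · rintro ⟨h1, h2⟩
    exact ⟨zeroForcing_iff_coverMinimal.mp h1,
      fun C hC hCS => h2 C (zeroForcing_iff_coverMinimal.mpr hC) hCS⟩
  · rintro ⟨h1, h2⟩
    exact ⟨zeroForcing_iff_coverMinimal.mpr h1,
      fun C hC hCS => h2 C (zeroForcing_iff_coverMinimal.mp hC) hCS⟩
end

section
/- If v lies in some minimal fort of a graph G, then v lies in some minimal zero forcing set of G. -/
variable {V : Type*} [Fintype V] [DecidableEq V]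

lemma blue_not_mem_fort {G : SimpleGraph V} {S W : Set V} (hW : Fort G W)
    (hdisj : ∀ s ∈ S, s ∉ W) : ∀ u, Blue G S u → u ∉ W := by
  intro u hu
  induction hu with
  | @init w h => exact hdisj w h
  | @force x w hadj hx h ihx ihh =>
    intro hwW
    exact hW.2 x ihx ⟨w, ⟨hwW, hadj⟩, fun w' ⟨hw'W, hadj'⟩ => by
      by_contra hne
      exact (ihh w' hadj' hne) hw'W⟩

lemma zf_inter_fort {G : SimpleGraph V} {S W : Set V} (hS : ZeroForcing G S)
    (hW : Fort G W) : (S ∩ W).Nonempty := by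
  by_contra hemp
  obtain ⟨w, hw⟩ := hW.1
  exact blue_not_mem_fort hW
    (fun s hs hsW => hemp ⟨s, hs, hsW⟩) w (hS w) hw

lemma zf_of_minimalFort {G : SimpleGraph V} {W : Set V} (hW : MinimalFort G W)
    {v : V} (hv : v ∈ W) : ZeroForcing G (Wᶜ ∪ {v}) := by
  set S : Set V := Wᶜ ∪ {v}
  by_contra hnzf
  simp only [ZeroForcing, not_forall] at hnzf
  obtain ⟨u, hu⟩ := hnzf
  set B : Set V := {x | ¬ Blue G S x} with hB
  have hBfort : Fort G B := by
    refine ⟨⟨u, hu⟩, fun x hx ⟨w, ⟨hwB, hadj⟩, huniq⟩ => ?_⟩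
    simp only [B, Set.mem_setOf_eq, not_not] at hx
    refine hwB (Blue.force hadj hx fun w' hadj' hne => ?_)
    by_contra hw'B
    exact hne (huniq w' ⟨hw'B, hadj'⟩)
  have hBsub : B ⊆ W := by
    intro x hx
    by_contra hxW
    exact hx (Blue.init (Or.inl hxW))
  have := hW.2 B hBfort hBsub
  have hvB : v ∈ B := this ▸ hv
  exact hvB (Blue.init (Or.inr rfl))

lemma exists_min_zf (G : SimpleGraph V) :
    ∀ n (S : Set V), S.ncard ≤ n → ZeroForcing G S →
      ∃ T, T ⊆ S ∧ MinimalZeroForcing G T := by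
  intro n
  induction n with
  | zero =>
    intro S hcard hzf
    have hS : S = ∅ := by
      have := Set.ncard_eq_zero (Set.toFinite S) |>.mp (Nat.le_zero.mp hcard)
      exact this
    exact ⟨S, le_refl _, hzf, fun S' _ hsub => by
      rw [hS] at hsub ⊢; exact Set.subset_eq_empty hsub rfl⟩
  | succ n ih =>
    intro S hcard hzf
    by_cases h : ∃ T, T ⊆ S ∧ T ≠ S ∧ ZeroForcing G T
    · obtain ⟨T, hTS, hTne, hTzf⟩ := h
      have hlt : T.ncard < S.ncard :=
        Set.ncard_lt_ncard (ssubset_of_subset_of_ne hTS hTne) (Set.toFinite S)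
      obtain ⟨T', hT'T, hT'⟩ := ih T (by omega) hTzf
      exact ⟨T', hT'T.trans hTS, hT'⟩
    · push_neg at h
      exact ⟨S, le_refl _, hzf, fun S' hS'zf hsub => by
        by_contra hne
        exact (h S' hsub hne) hS'zf⟩

theorem mem_minimalFort_imp_mem_minimalZeroForcing (G : SimpleGraph V) (v : V)
    (h : ∃ W, MinimalFort G W ∧ v ∈ W) :
    ∃ S, MinimalZeroForcing G S ∧ v ∈ S := by
  obtain ⟨W, hW, hvW⟩ := h
  have hzf := zf_of_minimalFort hW hvW
  obtain ⟨T, hTsub, hT⟩ := exists_min_zf G (Wᶜ ∪ {v}).ncard _ le_rfl hzf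
  refine ⟨T, hT, ?_⟩
  obtain ⟨w, hwT, hwW⟩ := zf_inter_fort hT.1 hW.1
  rcases hTsub hwT with hwc | hwv
  · exact absurd hwW hwc
  · exact hwv ▸ hwT
end

section
/- A vertex v of a graph G is in no minimal fort of G if and only if v is in no minimal zero forcing set of G. -/
set_option linter.unusedSectionVars false


variable {V : Type*} [Fintype V] [DecidableEq V]

lemma exists_min_aux {P : Set V → Prop} :
    ∀ n (W : Set V), W.ncard = n → P W →
      ∃ W₀, W₀ ⊆ W ∧ P W₀ ∧ ∀ W', P W' → W' ⊆ W₀ → W' = W₀ := by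
  intro n
  induction n using Nat.strong_induction_on with
  | _ n ih =>
    intro W hcard hP
    by_cases h : ∀ W', P W' → W' ⊆ W → W' = W
    · exact ⟨W, subset_rfl, hP, h⟩
    · push_neg at h
      obtain ⟨W', hPW', hsub, hne⟩ := h
      have hlt : W'.ncard < n := by
        rw [← hcard]
        exact Set.ncard_lt_ncard (ssubset_of_subset_of_ne hsub hne) W.toFinite
      obtain ⟨W₀, h1, h2, h3⟩ := ih _ hlt W' rfl hPW'
      exact ⟨W₀, h1.trans hsub, h2, h3⟩

lemma exists_min {P : Set V → Prop} {W : Set V} (hP : P W) :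
    ∃ W₀, W₀ ⊆ W ∧ P W₀ ∧ ∀ W', P W' → W' ⊆ W₀ → W' = W₀ :=
  exists_min_aux _ W rfl hP

/-- A set meeting every fort is a zero forcing set. -/
lemma hits_forts_zf {G : SimpleGraph V} {S : Set V}
    (h : ∀ W, Fort G W → (S ∩ W).Nonempty) : ZeroForcing G S := by
  by_contra hS
  unfold ZeroForcing at hS
  push_neg at hS
  obtain ⟨x, hx⟩ := hS
  set W : Set V := {y | ¬ Blue G S y} with hWdef
  have hfort : Fort G W := by
    refine ⟨⟨x, hx⟩, ?_⟩
    intro u hu huniq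
    simp only [hWdef, Set.mem_setOf_eq, not_not] at hu
    obtain ⟨w, ⟨hwW, hwadj⟩, huniqw⟩ := huniq
    have : Blue G S w := by
      refine Blue.force hwadj hu ?_
      intro w' hadj' hne'
      by_contra hw'
      exact hne' (huniqw w' ⟨hw', hadj'⟩)
    exact hwW this
  obtain ⟨y, hyS, hyW⟩ := h W hfort
  exact hyW (Blue.init hyS)

theorem fortIrrelevant_iff_zeroForcingIrrelevant (G : SimpleGraph V) (v : V) :
    (∀ W, MinimalFort G W → v ∉ W) ↔ (∀ S, MinimalZeroForcing G S → v ∉ S) := by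
  constructor
  · intro hF S hS hvS
    have hzf : ZeroForcing G (S \ {v}) := by
      apply hits_forts_zf
      intro W hW
      obtain ⟨W₀, hsub, hW₀, hmin⟩ := exists_min (P := Fort G) hW
      have hmf : MinimalFort G W₀ := ⟨hW₀, hmin⟩
      have hvW₀ : v ∉ W₀ := hF W₀ hmf
      obtain ⟨x, hxS, hxW₀⟩ := zf_inter_fort hS.1 hW₀
      exact ⟨x, ⟨hxS, fun hxv => hvW₀ (hxv ▸ hxW₀)⟩, hsub hxW₀⟩
    have := hS.2 _ hzf Set.diff_subset
    rw [← this] at hvS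
    exact hvS.2 rfl
  · intro hZ W hW hvW
    set S : Set V := (W \ {v})ᶜ with hSdef
    have hzf : ZeroForcing G S := by
      apply hits_forts_zf
      intro W' hW'
      by_contra hd
      rw [Set.not_nonempty_iff_eq_empty] at hd
      have hsub : W' ⊆ W \ {v} := by
        intro y hy
        by_contra hyn
        have : y ∈ S ∩ W' := ⟨hyn, hy⟩
        rw [hd] at this
        exact this
      have := hW.2 W' hW' (hsub.trans Set.diff_subset)
      rw [this] at hsub
      exact (hsub hvW).2 rfl
    obtain ⟨S', hsub, hS', hmin⟩ := exists_min (P := ZeroForcing G) hzf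
    have hmz : MinimalZeroForcing G S' := ⟨hS', hmin⟩
    obtain ⟨x, hxS', hxW⟩ := zf_inter_fort hS' hW.1
    have : x = v := by
      have := hsub hxS'
      simp only [hSdef, Set.mem_compl_iff, Set.mem_diff, not_and, not_not] at this
      exact Set.eq_of_mem_singleton (this hxW)
    exact hZ S' hmz (this ▸ hxS')
end

section
/- Let T be a tree with at least one vertex of degree ≥ 3, and let L_1, L_2 be two pendent paths attached to the same high-degree vertex v. The white vertices of the standard coloring of T on L_1 and L_2 (standard path coloring on L_1 and L_2 starting from the vertices adjacent to v, all other vertices blue) form a minimal fort of T. -/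
variable {V : Type*} [Fintype V] [DecidableEq V]

/-- A pendent path from `v`: vertices `x 0, ..., x (m-1)` forming a path starting at a
neighbor of `v`, ending at a leaf, all of whose other vertices have degree 2. -/
def PendentPath (T : SimpleGraph V) (v : V) (m : ℕ) (x : Fin m → V) : Prop :=
  Function.Injective x ∧ (∀ i, x i ≠ v) ∧
  (∀ h : 0 < m, T.Adj v (x ⟨0, h⟩)) ∧
  (∀ (i : ℕ) (h : i + 1 < m), T.Adj (x ⟨i, Nat.lt_of_succ_lt h⟩) (x ⟨i + 1, h⟩)) ∧
  (∀ h : 0 < m, (T.neighborSet (x ⟨m - 1, Nat.sub_lt h one_pos⟩)).ncard = 1) ∧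
  (∀ (i : ℕ) (h : i + 1 < m), (T.neighborSet (x ⟨i, Nat.lt_of_succ_lt h⟩)).ncard = 2)

set_option linter.unusedSectionVars false

namespace TwoLegsAux

variable {V : Type*} [Fintype V] [DecidableEq V]

lemma set_eq_pair {S : Set V} {c d : V} (h : S.ncard = 2) (hc : c ∈ S) (hd : d ∈ S)
    (hcd : c ≠ d) : S = {c, d} := by
  obtain ⟨a, b, hab, rfl⟩ := Set.ncard_eq_two.mp h
  simp only [Set.mem_insert_iff, Set.mem_singleton_iff] at hc hd
  rcases hc with rfl | rfl <;> rcases hd with rfl | rfl <;> simp_all [Set.pair_comm]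

lemma set_eq_singleton {S : Set V} {c : V} (h : S.ncard = 1) (hc : c ∈ S) : S = {c} := by
  obtain ⟨a, rfl⟩ := Set.ncard_eq_one.mp h
  simp_all

structure PP (T : SimpleGraph V) (v : V) (m : ℕ) (y : ℕ → V) : Prop where
  one_le : 1 ≤ m
  inj : ∀ ⦃i j : ℕ⦄, i < m → j < m → y i = y j → i = j
  ne_v : ∀ i, i < m → y i ≠ v
  adj0 : T.Adj v (y 0)
  adj : ∀ i, i + 1 < m → T.Adj (y i) (y (i+1))
  leaf : (T.neighborSet (y (m-1))).ncard = 1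
  mid : ∀ i, i + 1 < m → (T.neighborSet (y i)).ncard = 2

variable {T : SimpleGraph V} {v : V} {m m₁ m₂ : ℕ} {y y₁ y₂ : ℕ → V} {W W' : Set V}

lemma PP.adj_iff (pp : PP T v m y) {i : ℕ} (hi : i < m) (u : V) :
    T.Adj u (y i) ↔ (i = 0 ∧ u = v) ∨ (1 ≤ i ∧ u = y (i-1)) ∨ (i + 1 < m ∧ u = y (i+1)) := by
  rw [SimpleGraph.adj_comm, ← SimpleGraph.mem_neighborSet]
  rcases Nat.lt_or_ge (i+1) m with hlt | hge
  · rcases Nat.eq_zero_or_pos i with rfl | hpos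
    · have hset : T.neighborSet (y 0) = {v, y 1} :=
        set_eq_pair (pp.mid 0 hlt) pp.adj0.symm (pp.adj 0 hlt) (fun h => pp.ne_v 1 hlt h.symm)
      rw [hset]
      simp only [Set.mem_insert_iff, Set.mem_singleton_iff]
      constructor
      · rintro (rfl | rfl)
        · tauto
        · tauto
      · rintro (⟨-, rfl⟩ | ⟨h1, -⟩ | ⟨-, rfl⟩)
        · exact Or.inl rfl
        · omega
        · exact Or.inr rfl
    · have e : i - 1 + 1 = i := by omega
      have hadj1 : T.Adj (y i) (y (i-1)) := by
        have h := pp.adj (i-1) (by omega)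
        rw [e] at h; exact h.symm
      have hset : T.neighborSet (y i) = {y (i-1), y (i+1)} :=
        set_eq_pair (pp.mid i hlt) hadj1 (pp.adj i hlt)
          (fun h => by have := pp.inj (by omega) (by omega) h; omega)
      rw [hset]
      simp only [Set.mem_insert_iff, Set.mem_singleton_iff]
      constructor
      · rintro (rfl | rfl)
        · tauto
        · tauto
      · rintro (⟨h0, -⟩ | ⟨-, rfl⟩ | ⟨-, rfl⟩)
        · omega
        · exact Or.inl rfl
        · exact Or.inr rfl
  · have him : i = m - 1 := by omega
    rcases Nat.eq_zero_or_pos i with rfl | hpos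
    · have hm1 : m = 1 := by omega
      have hset : T.neighborSet (y 0) = {v} := by
        have := pp.leaf
        rw [hm1] at this
        exact set_eq_singleton this pp.adj0.symm
      rw [hset]
      simp only [Set.mem_singleton_iff]
      constructor
      · intro h; tauto
      · rintro (⟨-, rfl⟩ | ⟨h1, -⟩ | ⟨h2, -⟩)
        · rfl
        · omega
        · omega
    · have e : i - 1 + 1 = i := by omega
      have hadj1 : T.Adj (y i) (y (i-1)) := by
        have h := pp.adj (i-1) (by omega)
        rw [e] at h; exact h.symm
      have hset : T.neighborSet (y i) = {y (i-1)} := by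
        have hl := pp.leaf
        rw [← him] at hl
        exact set_eq_singleton hl hadj1
      rw [hset]
      simp only [Set.mem_singleton_iff]
      constructor
      · intro h; tauto
      · rintro (⟨h0, -⟩ | ⟨-, rfl⟩ | ⟨h2, -⟩)
        · omega
        · rfl
        · omega

/-- The white vertices of a leg. -/
def legW (m : ℕ) (y : ℕ → V) : Set V := {w | ∃ i, i < m ∧ w = y i ∧ (i % 2 = 0 ∨ i + 1 = m)}

lemma nbrW (pp₁ : PP T v m₁ y₁) (pp₂ : PP T v m₂ y₂)
    (hd : ∀ i j, i < m₁ → j < m₂ → y₁ i ≠ y₂ j)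
    (hWc : ∀ w ∈ W', w ∈ legW m₁ y₁ ∨ w ∈ legW m₂ y₂)
    {i : ℕ} (hi : i < m₁) {w : V} (hw : w ∈ W') (hadj : T.Adj (y₁ i) w) :
    ∃ j, j < m₁ ∧ w = y₁ j ∧ (j + 1 = i ∨ i + 1 = j) ∧ (j % 2 = 0 ∨ j + 1 = m₁) := by
  rcases hWc w hw with h | h
  · obtain ⟨j, hj, rfl, hwh⟩ := h
    rcases (pp₁.adj_iff hj (y₁ i)).mp hadj with ⟨rfl, hv⟩ | ⟨h1, he⟩ | ⟨h2, he⟩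
    · exact absurd hv (pp₁.ne_v i hi)
    · have : i = j - 1 := pp₁.inj hi (by omega) he
      exact ⟨j, hj, rfl, Or.inr (by omega), hwh⟩
    · have : i = j + 1 := pp₁.inj hi h2 he
      exact ⟨j, hj, rfl, Or.inl (by omega), hwh⟩
  · obtain ⟨j, hj, rfl, -⟩ := h
    rcases (pp₂.adj_iff hj (y₁ i)).mp hadj with ⟨-, hv⟩ | ⟨h1, he⟩ | ⟨h2, he⟩
    · exact absurd hv (pp₁.ne_v i hi)
    · exact absurd he (hd i _ hi (by omega))
    · exact absurd he (hd i _ hi h2)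

lemma blue_not_mem (pp₁ : PP T v m₁ y₁)
    (hd : ∀ i j, i < m₁ → j < m₂ → y₁ i ≠ y₂ j)
    {i : ℕ} (hlt : i + 1 < m₁) (hodd : i % 2 = 1) :
    ¬ (y₁ i ∈ legW m₁ y₁ ∨ y₁ i ∈ legW m₂ y₂) := by
  rintro (⟨j, hj, he, hwh⟩ | ⟨j, hj, he, -⟩)
  · have : i = j := pp₁.inj (by omega) hj he
    omega
  · exact hd i j (by omega) hj he

lemma v_not_mem (pp₁ : PP T v m₁ y₁) (pp₂ : PP T v m₂ y₂) :
    ¬ (v ∈ legW m₁ y₁ ∨ v ∈ legW m₂ y₂) := by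
  rintro (⟨j, hj, he, -⟩ | ⟨j, hj, he, -⟩)
  · exact pp₁.ne_v j hj he.symm
  · exact pp₂.ne_v j hj he.symm


def Fort' (G : SimpleGraph V) (W : Set V) : Prop :=
  W.Nonempty ∧ ∀ v ∉ W, ¬ ∃! w, w ∈ W ∧ G.Adj v w

lemma leg_blue_contra (pp : PP T v m y)
    (hWin : ∀ j, j < m → (j % 2 = 0 ∨ j + 1 = m) → y j ∈ W)
    {i : ℕ} (hodd : i % 2 = 1) (hlt : i + 1 < m) :
    ¬ ∃! w, w ∈ W ∧ T.Adj (y i) w := by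
  rintro ⟨w, -, huniq⟩
  have hadj1 : T.Adj (y i) (y (i-1)) := by
    have h := pp.adj (i-1) (by omega)
    have e : i - 1 + 1 = i := by omega
    rw [e] at h; exact h.symm
  have e1 := huniq (y (i-1)) ⟨hWin (i-1) (by omega) (by omega), hadj1⟩
  have e2 := huniq (y (i+1)) ⟨hWin (i+1) hlt (by omega), pp.adj i hlt⟩
  have : i - 1 = i + 1 := pp.inj (by omega) (by omega) (e1.trans e2.symm)
  omega

lemma fort_main (pp₁ : PP T v m₁ y₁) (pp₂ : PP T v m₂ y₂)
    (hd : ∀ i j, i < m₁ → j < m₂ → y₁ i ≠ y₂ j) :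
    Fort' T (legW m₁ y₁ ∪ legW m₂ y₂) := by
  constructor
  · exact ⟨y₁ 0, Set.mem_union_left _ ⟨0, pp₁.one_le, rfl, Or.inl rfl⟩⟩
  · intro u hu hex
    have hWin1 : ∀ j, j < m₁ → (j % 2 = 0 ∨ j + 1 = m₁) → y₁ j ∈ legW m₁ y₁ ∪ legW m₂ y₂ :=
      fun j hj hw => Set.mem_union_left _ ⟨j, hj, rfl, hw⟩
    have hWin2 : ∀ j, j < m₂ → (j % 2 = 0 ∨ j + 1 = m₂) → y₂ j ∈ legW m₁ y₁ ∪ legW m₂ y₂ :=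
      fun j hj hw => Set.mem_union_right _ ⟨j, hj, rfl, hw⟩
    by_cases huv : u = v
    · subst huv
      obtain ⟨w, -, huniq⟩ := hex
      have e1 := huniq (y₁ 0) ⟨hWin1 0 pp₁.one_le (Or.inl rfl), pp₁.adj0⟩
      have e2 := huniq (y₂ 0) ⟨hWin2 0 pp₂.one_le (Or.inl rfl), pp₂.adj0⟩
      exact hd 0 0 pp₁.one_le pp₂.one_le (e1.trans e2.symm)
    by_cases hy1 : ∃ i, i < m₁ ∧ u = y₁ i
    · obtain ⟨i, hi, rfl⟩ := hy1
      have hblue : i % 2 = 1 ∧ i + 1 < m₁ := by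
        by_contra hc
        exact hu (Set.mem_union_left _ ⟨i, hi, rfl, by omega⟩)
      exact leg_blue_contra pp₁ hWin1 hblue.1 hblue.2 hex
    by_cases hy2 : ∃ i, i < m₂ ∧ u = y₂ i
    · obtain ⟨i, hi, rfl⟩ := hy2
      have hblue : i % 2 = 1 ∧ i + 1 < m₂ := by
        by_contra hc
        exact hu (Set.mem_union_right _ ⟨i, hi, rfl, by omega⟩)
      exact leg_blue_contra pp₂ hWin2 hblue.1 hblue.2 hex
    · obtain ⟨w, ⟨hwW, hadj⟩, -⟩ := hex
      rcases (Set.mem_union _ _ _).mp hwW with ⟨j, hj, rfl, -⟩ | ⟨j, hj, rfl, -⟩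
      · rcases (pp₁.adj_iff hj u).mp hadj with ⟨-, rfl⟩ | ⟨h1, rfl⟩ | ⟨h2, rfl⟩
        · exact huv rfl
        · exact hy1 ⟨j-1, by omega, rfl⟩
        · exact hy1 ⟨j+1, h2, rfl⟩
      · rcases (pp₂.adj_iff hj u).mp hadj with ⟨-, rfl⟩ | ⟨h1, rfl⟩ | ⟨h2, rfl⟩
        · exact huv rfl
        · exact hy2 ⟨j-1, by omega, rfl⟩
        · exact hy2 ⟨j+1, h2, rfl⟩

lemma blue_link (pp₁ : PP T v m₁ y₁) (pp₂ : PP T v m₂ y₂)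
    (hd : ∀ i j, i < m₁ → j < m₂ → y₁ i ≠ y₂ j)
    (hW' : Fort' T W')
    (hWc : ∀ w ∈ W', w ∈ legW m₁ y₁ ∨ w ∈ legW m₂ y₂)
    {i : ℕ} (hodd : i % 2 = 1) (hlt : i + 1 < m₁) :
    (y₁ (i-1) ∈ W' ↔ y₁ (i+1) ∈ W') := by
  have hi1 : 1 ≤ i := by omega
  have hnm : y₁ i ∉ W' := fun h => blue_not_mem pp₁ hd hlt hodd (hWc _ h)
  have hcls : ∀ w ∈ W', T.Adj (y₁ i) w → w = y₁ (i-1) ∨ w = y₁ (i+1) := by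
    intro w hw hadj
    obtain ⟨j, hj, rfl, hor, -⟩ := nbrW pp₁ pp₂ hd hWc (by omega) hw hadj
    rcases hor with h | h
    · exact Or.inl (by rw [show j = i - 1 by omega])
    · exact Or.inr (by rw [show j = i + 1 by omega])
  have hadj1 : T.Adj (y₁ i) (y₁ (i-1)) := by
    have h := pp₁.adj (i-1) (by omega)
    have e : i - 1 + 1 = i := by omega
    rw [e] at h; exact h.symm
  have hadj2 : T.Adj (y₁ i) (y₁ (i+1)) := pp₁.adj i hlt
  constructor
  · intro h1
    by_contra h2
    refine hW'.2 (y₁ i) hnm ⟨y₁ (i-1), ⟨h1, hadj1⟩, ?_⟩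
    rintro w ⟨hw, hadj⟩
    rcases hcls w hw hadj with h | h
    · exact h
    · exact absurd (h ▸ hw) h2
  · intro h1
    by_contra h2
    refine hW'.2 (y₁ i) hnm ⟨y₁ (i+1), ⟨h1, hadj2⟩, ?_⟩
    rintro w ⟨hw, hadj⟩
    rcases hcls w hw hadj with h | h
    · exact absurd (h ▸ hw) h2
    · exact h

lemma leaf_link (pp₁ : PP T v m₁ y₁) (pp₂ : PP T v m₂ y₂)
    (hd : ∀ i j, i < m₁ → j < m₂ → y₁ i ≠ y₂ j)
    (hW' : Fort' T W')
    (hWc : ∀ w ∈ W', w ∈ legW m₁ y₁ ∨ w ∈ legW m₂ y₂)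
    (hm : 2 ≤ m₁) (heven : m₁ % 2 = 0) :
    (y₁ (m₁ - 1) ∈ W' ↔ y₁ (m₁ - 2) ∈ W') := by
  have hadj : T.Adj (y₁ (m₁-2)) (y₁ (m₁-1)) := by
    have h := pp₁.adj (m₁-2) (by omega)
    have e : m₁ - 2 + 1 = m₁ - 1 := by omega
    rw [e] at h; exact h
  constructor
  · intro h1
    by_contra h2
    refine hW'.2 (y₁ (m₁-2)) h2 ⟨y₁ (m₁-1), ⟨h1, hadj⟩, ?_⟩
    rintro w ⟨hw, hadjw⟩
    obtain ⟨j, hj, rfl, hor, hwh⟩ := nbrW pp₁ pp₂ hd hWc (show m₁ - 2 < m₁ by omega) hw hadjw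
    have : j = m₁ - 1 := by omega
    rw [this]
  · intro h1
    by_contra h2
    refine hW'.2 (y₁ (m₁-1)) h2 ⟨y₁ (m₁-2), ⟨h1, hadj.symm⟩, ?_⟩
    rintro w ⟨hw, hadjw⟩
    obtain ⟨j, hj, rfl, hor, hwh⟩ := nbrW pp₁ pp₂ hd hWc (show m₁ - 1 < m₁ by omega) hw hadjw
    have : j = m₁ - 2 := by omega
    rw [this]

lemma v_link (pp₁ : PP T v m₁ y₁) (pp₂ : PP T v m₂ y₂)
    (hd : ∀ i j, i < m₁ → j < m₂ → y₁ i ≠ y₂ j)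
    (hW' : Fort' T W')
    (hWc : ∀ w ∈ W', w ∈ legW m₁ y₁ ∨ w ∈ legW m₂ y₂)
    (h0 : y₁ 0 ∈ W') : y₂ 0 ∈ W' := by
  by_contra h2
  have hnv : v ∉ W' := fun h => v_not_mem pp₁ pp₂ (hWc _ h)
  refine hW'.2 v hnv ⟨y₁ 0, ⟨h0, pp₁.adj0⟩, ?_⟩
  rintro w ⟨hw, hadj⟩
  rcases hWc w hw with ⟨j, hj, rfl, -⟩ | ⟨j, hj, rfl, -⟩
  · rcases (pp₁.adj_iff hj v).mp hadj with ⟨rfl, -⟩ | ⟨-, he⟩ | ⟨h2', he⟩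
    · rfl
    · exact absurd he.symm (pp₁.ne_v _ (by omega))
    · exact absurd he.symm (pp₁.ne_v _ h2')
  · rcases (pp₂.adj_iff hj v).mp hadj with ⟨rfl, -⟩ | ⟨-, he⟩ | ⟨h2', he⟩
    · exact absurd hw h2
    · exact absurd he.symm (pp₂.ne_v _ (by omega))
    · exact absurd he.symm (pp₂.ne_v _ h2')

lemma chain (pp₁ : PP T v m₁ y₁) (pp₂ : PP T v m₂ y₂)
    (hd : ∀ i j, i < m₁ → j < m₂ → y₁ i ≠ y₂ j)
    (hW' : Fort' T W')
    (hWc : ∀ w ∈ W', w ∈ legW m₁ y₁ ∨ w ∈ legW m₂ y₂) :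
    ∀ i, i < m₁ → (i % 2 = 0 ∨ i + 1 = m₁) → (y₁ i ∈ W' ↔ y₁ 0 ∈ W') := by
  intro i
  induction i using Nat.strong_induction_on with
  | _ i ih =>
    intro hi hwh
    rcases Nat.eq_zero_or_pos i with rfl | hpos
    · exact Iff.rfl
    by_cases hieven : i % 2 = 0
    · have h1 := blue_link pp₁ pp₂ hd hW' hWc (i := i-1) (by omega) (by omega)
      have e1 : i - 1 - 1 = i - 2 := by omega
      have e2 : i - 1 + 1 = i := by omega
      rw [e1, e2] at h1
      exact h1.symm.trans (ih (i-2) (by omega) (by omega) (by omega))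
    · have hlast : i + 1 = m₁ := by omega
      have heven : m₁ % 2 = 0 := by omega
      have h1 := leaf_link pp₁ pp₂ hd hW' hWc (by omega) heven
      have e : m₁ - 1 = i := by omega
      rw [e] at h1
      exact h1.trans (ih (m₁-2) (by omega) (by omega) (by omega))

lemma min_main (pp₁ : PP T v m₁ y₁) (pp₂ : PP T v m₂ y₂)
    (hd : ∀ i j, i < m₁ → j < m₂ → y₁ i ≠ y₂ j)
    (hW' : Fort' T W')
    (hsub : W' ⊆ legW m₁ y₁ ∪ legW m₂ y₂) :
    legW m₁ y₁ ∪ legW m₂ y₂ ⊆ W' := by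
  have hWc : ∀ w ∈ W', w ∈ legW m₁ y₁ ∨ w ∈ legW m₂ y₂ :=
    fun w hw => (Set.mem_union _ _ _).mp (hsub hw)
  have hd' : ∀ i j, i < m₂ → j < m₁ → y₂ i ≠ y₁ j := fun i j hi hj h => hd j i hj hi h.symm
  have hWc' : ∀ w ∈ W', w ∈ legW m₂ y₂ ∨ w ∈ legW m₁ y₁ := fun w hw => (hWc w hw).symm
  obtain ⟨w0, hw0⟩ := hW'.1
  have key1 : y₁ 0 ∈ W' := by
    rcases hWc w0 hw0 with ⟨i, hi, rfl, hwh⟩ | ⟨i, hi, rfl, hwh⟩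
    · exact (chain pp₁ pp₂ hd hW' hWc i hi hwh).mp hw0
    · have h20 : y₂ 0 ∈ W' := (chain pp₂ pp₁ hd' hW' hWc' i hi hwh).mp hw0
      exact v_link pp₂ pp₁ hd' hW' hWc' h20
  have key2 : y₂ 0 ∈ W' := v_link pp₁ pp₂ hd hW' hWc key1
  rintro w (⟨i, hi, rfl, hwh⟩ | ⟨i, hi, rfl, hwh⟩)
  · exact (chain pp₁ pp₂ hd hW' hWc i hi hwh).mpr key1
  · exact (chain pp₂ pp₁ hd' hW' hWc' i hi hwh).mpr key2


def extFun {m : ℕ} (hm : 1 ≤ m) (x : Fin m → V) : ℕ → V :=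
  fun i => x ⟨min i (m-1), by omega⟩

lemma extFun_eq {m : ℕ} (hm : 1 ≤ m) (x : Fin m → V) {i : ℕ} (hi : i < m) :
    extFun hm x i = x ⟨i, hi⟩ := by
  unfold extFun
  congr 1
  simp only [Fin.mk.injEq]
  omega



lemma toPP {T : SimpleGraph V} {v : V} {m : ℕ} (hm : 1 ≤ m) {x : Fin m → V}
    (h : _root_.PendentPath T v m x) : PP T v m (extFun hm x) := by
  obtain ⟨hinj, hnv, h0, hs, hl, hmid⟩ := h
  refine ⟨hm, ?_, ?_, ?_, ?_, ?_, ?_⟩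
  · intro i j hi hj he
    rw [extFun_eq hm x hi, extFun_eq hm x hj] at he
    simpa using hinj he
  · intro i hi
    rw [extFun_eq hm x hi]
    exact hnv _
  · rw [extFun_eq hm x hm]
    exact h0 hm
  · intro i hlt
    rw [extFun_eq hm x (Nat.lt_of_succ_lt hlt), extFun_eq hm x hlt]
    exact hs i hlt
  · rw [extFun_eq hm x (show m - 1 < m by omega)]
    exact hl hm
  · intro i hlt
    rw [extFun_eq hm x (Nat.lt_of_succ_lt hlt)]
    exact hmid i hlt

lemma setEq {m : ℕ} (hm : 1 ≤ m) (x : Fin m → V) :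
    {w | ∃ i : Fin m, w = x i ∧ ¬ (i.val % 2 = 1 ∧ i.val + 1 < m)} = legW m (extFun hm x) := by
  ext w
  simp only [Set.mem_setOf_eq, legW]
  constructor
  · rintro ⟨i, rfl, hc⟩
    have hlt := i.isLt
    refine ⟨i.val, i.isLt, ?_, by omega⟩
    rw [extFun_eq hm x i.isLt]
  · rintro ⟨i, hi, rfl, hwh⟩
    exact ⟨⟨i, hi⟩, extFun_eq hm x hi, show ¬(i % 2 = 1 ∧ i + 1 < m) by omega⟩

end TwoLegsAux

theorem standard_coloring_two_legs_minimalFort (T : SimpleGraph V) (hT : T.IsTree) (v : V)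
    (hv : 3 ≤ (T.neighborSet v).ncard)
    (m₁ m₂ : ℕ) (hm₁ : 1 ≤ m₁) (hm₂ : 1 ≤ m₂)
    (x₁ : Fin m₁ → V) (x₂ : Fin m₂ → V)
    (h₁ : PendentPath T v m₁ x₁) (h₂ : PendentPath T v m₂ x₂)
    (hdisj : ∀ i j, x₁ i ≠ x₂ j) :
    MinimalFort T
      ({w | ∃ i : Fin m₁, w = x₁ i ∧ ¬ (i.val % 2 = 1 ∧ i.val + 1 < m₁)} ∪
       {w | ∃ i : Fin m₂, w = x₂ i ∧ ¬ (i.val % 2 = 1 ∧ i.val + 1 < m₂)}) := by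
  classical
  have pp₁ := TwoLegsAux.toPP hm₁ h₁
  have pp₂ := TwoLegsAux.toPP hm₂ h₂
  have hd : ∀ i j, i < m₁ → j < m₂ →
      TwoLegsAux.extFun hm₁ x₁ i ≠ TwoLegsAux.extFun hm₂ x₂ j := by
    intro i j hi hj
    rw [TwoLegsAux.extFun_eq hm₁ x₁ hi, TwoLegsAux.extFun_eq hm₂ x₂ hj]
    exact hdisj _ _
  rw [MinimalFort, TwoLegsAux.setEq hm₁ x₁, TwoLegsAux.setEq hm₂ x₂]
  constructor
  · exact TwoLegsAux.fort_main pp₁ pp₂ hd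
  · intro W' hW' hsub
    exact Set.Subset.antisymm hsub (TwoLegsAux.min_main pp₁ pp₂ hd hW' hsub)
end

section
/- The spider tree star_{2,2,2}, obtained by subdividing each edge of the star K_{1,3} once, is well-failed: every minimal fort has exactly four vertices. -/
variable {V : Type*} [Fintype V] [DecidableEq V]

/-- The spider tree `star_{2,2,2}`: the subdivision of `K_{1,3}`, with center `0`
and legs `0-1-2`, `0-3-4`, `0-5-6`. -/
def star222 : SimpleGraph (Fin 7) :=
  SimpleGraph.fromRel (fun i j => (i.val, j.val) ∈ [(0,1), (1,2), (0,3), (3,4), (0,5), (5,6)])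

instance : DecidableRel star222.Adj := fun i j =>
  inferInstanceAs (Decidable (i ≠ j ∧ _))

/-- Finset version of `Fort` for `star222`. -/
def FortF (F : Finset (Fin 7)) : Prop :=
  F.Nonempty ∧ ∀ v ∉ F, ¬ ∃! w, w ∈ F ∧ star222.Adj v w

instance (F : Finset (Fin 7)) : Decidable (FortF F) := by
  unfold FortF ExistsUnique; infer_instance

lemma fortF_iff (F : Finset (Fin 7)) : FortF F ↔ Fort star222 (↑F : Set (Fin 7)) := by
  simp [FortF, Fort]

lemma key : ∀ F : Finset (Fin 7),
    (FortF F ∧ ∀ F', FortF F' → F' ⊆ F → F' = F) → F.card = 4 := by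
  set_option maxRecDepth 10000 in decide

theorem star222_wellFailed :
    ∀ W : Set (Fin 7), MinimalFort star222 W → W.ncard = 4 := by
  intro W hW
  classical
  have hco : (↑W.toFinset : Set (Fin 7)) = W := Set.coe_toFinset W
  have h4 : W.toFinset.card = 4 := by
    apply key
    constructor
    · rw [fortF_iff, hco]; exact hW.1
    · intro F' hF' hsub
      have : (↑F' : Set (Fin 7)) = W := hW.2 _ ((fortF_iff F').mp hF')
        (by rw [← hco]; exact_mod_cast hsub)
      apply Finset.coe_injective
      rw [this, hco]
  rw [Set.ncard_eq_toFinset_card' W]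
  exact h4
end

section
/- Every tree with at least two vertices of degree ≥ 3 contains at least two pendent generalized stars. -/
variable {V : Type*} [Fintype V] [DecidableEq V]

/-- `v` is the center of a pendent generalized star: it has degree at least 3 and
exactly one of its neighbors does not start a pendent path of `v` (so that deleting `v`
leaves `k + 1` components, exactly `k ≥ 2` of which are pendent paths of `v`). -/
def PGSCenter (T : SimpleGraph V) (v : V) : Prop :=
  3 ≤ (T.neighborSet v).ncard ∧
  ∃! u, T.Adj v u ∧
    ¬ ∃ (m : ℕ) (x : Fin m → V), PendentPath T v m x ∧ ∃ h : 0 < m, x ⟨0, h⟩ = u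

section TreeAux

open SimpleGraph

/-- Vertices reachable from `u` by a walk avoiding `v`. -/
inductive Away (T : SimpleGraph V) (v u : V) : V → Prop
  | base (h : u ≠ v) : Away T v u u
  | step {w z : V} (hw : Away T v u w) (hadj : T.Adj w z) (hz : z ≠ v) : Away T v u z

lemma Away.ne {T : SimpleGraph V} {v u w : V} (h : Away T v u w) : w ≠ v := by
  induction h with
  | base h => exact h
  | step _ _ hz _ => exact hz

lemma Away.start_ne {T : SimpleGraph V} {v u w : V} (h : Away T v u w) : u ≠ v := by
  induction h with
  | base h => exact h
  | step _ _ _ ih => exact ih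

lemma Away.trans {T : SimpleGraph V} {v a b c : V} (h1 : Away T v a b) (h2 : Away T v b c) :
    Away T v a c := by
  induction h2 with
  | base _ => exact h1
  | step _ hadj hz ih => exact .step ih hadj hz

lemma Away.symm {T : SimpleGraph V} {v u w : V} (h : Away T v u w) : Away T v w u := by
  induction h with
  | base h => exact .base h
  | step hw hadj hz ih => exact Away.trans (.step (.base hz) hadj.symm hw.ne) ih

lemma away_exists_walk {T : SimpleGraph V} {v u w : V} (h : Away T v u w) :
    ∃ p : T.Walk u w, v ∉ p.support := by
  induction h with
  | base h =>
    exact ⟨Walk.nil, by simp [Ne.symm h]⟩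
  | step hw hadj hz ih =>
    obtain ⟨p, hp⟩ := ih
    refine ⟨p.concat hadj, ?_⟩
    intro hmem
    rw [Walk.support_concat] at hmem
    rw [List.mem_append] at hmem
    rcases hmem with h' | h'
    · exact hp h'
    · simp at h'
      exact hz h'.symm

lemma away_of_walk {T : SimpleGraph V} {v : V} :
    ∀ {u w : V} (p : T.Walk u w), v ∉ p.support → Away T v u w := by
  intro u w p
  induction p with
  | nil =>
    intro h
    rw [Walk.support_nil] at h
    exact .base (fun e => h (by simp [e]))
  | @cons a c d hadj q ih =>
    intro h
    rw [Walk.support_cons, List.mem_cons] at h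
    push_neg at h
    obtain ⟨h2, h1⟩ := h
    have h3 : c ≠ v := fun e => h1 (by rw [← e]; exact q.start_mem_support)
    exact Away.trans (.step (.base (Ne.symm h2)) hadj h3) (ih h1)

lemma not_away_adj {T : SimpleGraph V} (hT : T.IsTree) {v u1 u2 : V}
    (h1 : T.Adj v u1) (h2 : T.Adj v u2) (hne : u1 ≠ u2) : ¬ Away T v u1 u2 := by
  intro ha
  obtain ⟨p, hp⟩ := away_exists_walk ha
  have hq : v ∉ p.bypass.support := fun h => hp (Walk.support_bypass_subset p h)
  have hr : (Walk.cons h1.symm (Walk.cons h2 Walk.nil) : T.Walk u1 u2).IsPath := by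
    simp [Walk.cons_isPath_iff, h1.ne', h2.ne, hne]
  have heq := SimpleGraph.isAcyclic_iff_path_unique.mp hT.IsAcyclic
    ⟨p.bypass, p.bypass_isPath⟩ ⟨_, hr⟩
  have hv : v ∈ p.bypass.support := by
    have : p.bypass = Walk.cons h1.symm (Walk.cons h2 Walk.nil) := congrArg Subtype.val heq
    rw [this]
    simp
  exact hq hv

lemma exists_adj_away {T : SimpleGraph V} (hT : T.IsTree) {v w : V} (hne : w ≠ v) :
    ∃ u, T.Adj v u ∧ Away T v u w := by
  obtain ⟨p⟩ := hT.isConnected.preconnected v w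
  obtain ⟨r, hr⟩ : ∃ r : T.Walk v w, r.IsPath := ⟨p.bypass, p.bypass_isPath⟩
  cases r with
  | nil => exact absurd rfl hne
  | cons hadj r' =>
    rw [Walk.cons_isPath_iff] at hr
    exact ⟨_, hadj, away_of_walk r' hr.2⟩

lemma dist_lt_of_blocked {T : SimpleGraph V} (hT : T.IsTree) {a w b : V} (hwa : w ≠ a)
    (hblock : ¬ Away T a w b) : T.dist a b + 1 ≤ T.dist w b := by
  obtain ⟨p, hp⟩ := (hT.isConnected.preconnected w b).exists_walk_length_eq_dist
  have ha : a ∈ p.support := by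
    by_contra hna
    exact hblock (away_of_walk p hna)
  have h1 := SimpleGraph.dist_le (p.takeUntil a ha)
  have h2 := SimpleGraph.dist_le (p.dropUntil a ha)
  have h3 : (p.takeUntil a ha).length + (p.dropUntil a ha).length = p.length := by
    rw [← Walk.length_append, Walk.take_spec]
  have h4 : 0 < T.dist w a := hT.isConnected.pos_dist_of_ne hwa
  omega

lemma pendent_away {T : SimpleGraph V} {v : V} {m : ℕ} {x : Fin m → V}
    (hpp : PendentPath T v m x) (hm : 0 < m) :
    ∀ (k : ℕ) (hk : k < m), Away T v (x ⟨0, hm⟩) (x ⟨k, hk⟩) := by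
  intro k
  induction k with
  | zero => intro hk; exact .base (hpp.2.1 _)
  | succ n ih =>
    intro hk
    exact .step (ih (by omega)) (hpp.2.2.2.1 n hk) (hpp.2.1 _)

lemma pendent_deg_le {T : SimpleGraph V} {v : V} {m : ℕ} {x : Fin m → V}
    (hpp : PendentPath T v m x) (i : Fin m) : (T.neighborSet (x i)).ncard ≤ 2 := by
  obtain ⟨k, hk⟩ := i
  by_cases h : k + 1 < m
  · rw [hpp.2.2.2.2.2 k h]
  · have hm : 0 < m := by omega
    have hk' : k = m - 1 := by omega
    have e : (⟨k, hk⟩ : Fin m) = ⟨m - 1, Nat.sub_lt hm one_pos⟩ := Fin.ext (by simp [hk'])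
    rw [e, hpp.2.2.2.2.1 hm]
    omega

lemma pendent_cover {T : SimpleGraph V} {v : V} {m : ℕ} {x : Fin m → V}
    (hpp : PendentPath T v m x) (hm : 0 < m) :
    ∀ w, Away T v (x ⟨0, hm⟩) w → ∃ i, x i = w := by
  obtain ⟨hinj, hnev, hadj0, hchain, hlast, hmid⟩ := hpp
  intro w hw
  induction hw with
  | base _ => exact ⟨⟨0, hm⟩, rfl⟩
  | @step w' z hw' hadj hz ih =>
    obtain ⟨⟨k, hk⟩, rfl⟩ := ih
    -- the "previous" neighbor of x ⟨k, hk⟩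
    have hprev : ∃ p : V, T.Adj (x ⟨k, hk⟩) p ∧ (p = v ∨ ∃ hk' : k - 1 < m, k ≠ 0 ∧ p = x ⟨k - 1, hk'⟩) := by
      by_cases h0 : k = 0
      · subst h0
        exact ⟨v, (hadj0 hm).symm, Or.inl rfl⟩
      · have e1 : k - 1 + 1 < m := by omega
        have e2 : (⟨k - 1 + 1, e1⟩ : Fin m) = ⟨k, hk⟩ := Fin.ext (by simp; omega)
        have := hchain (k - 1) e1
        rw [e2] at this
        exact ⟨x ⟨k - 1, by omega⟩, this.symm, Or.inr ⟨by omega, h0, rfl⟩⟩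
    obtain ⟨p, hpadj, hpor⟩ := hprev
    by_cases hk1 : k + 1 < m
    · -- internal vertex: neighborhood is exactly {p, x ⟨k+1⟩}
      have hpq : p ≠ x ⟨k + 1, hk1⟩ := by
        rcases hpor with rfl | ⟨hk', h0, rfl⟩
        · exact (hnev _).symm
        · intro h
          have := hinj h
          rw [Fin.mk.injEq] at this
          omega
      have hsub : ({p, x ⟨k + 1, hk1⟩} : Set V) ⊆ T.neighborSet (x ⟨k, hk⟩) := by
        intro y hy
        rcases hy with rfl | hy
        · exact hpadj
        · rw [Set.mem_singleton_iff] at hy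
          subst hy
          exact hchain k hk1
      have hcard : (T.neighborSet (x ⟨k, hk⟩)).ncard ≤ ({p, x ⟨k + 1, hk1⟩} : Set V).ncard := by
        rw [hmid k hk1, Set.ncard_pair hpq]
      have heq := Set.eq_of_subset_of_ncard_le hsub hcard (Set.toFinite _)
      have hzmem : z ∈ ({p, x ⟨k + 1, hk1⟩} : Set V) := by
        rw [heq]; exact hadj
      rcases hzmem with rfl | hzmem
      · rcases hpor with rfl | ⟨hk', h0, rfl⟩
        · exact absurd rfl hz
        · exact ⟨⟨k - 1, hk'⟩, rfl⟩
      · rw [Set.mem_singleton_iff] at hzmem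
        exact ⟨⟨k + 1, hk1⟩, hzmem.symm⟩
    · -- last vertex: neighborhood is exactly {p}
      have hke : (⟨k, hk⟩ : Fin m) = ⟨m - 1, Nat.sub_lt hm one_pos⟩ := Fin.ext (by simp; omega)
      have hsub : ({p} : Set V) ⊆ T.neighborSet (x ⟨k, hk⟩) := by
        intro y hy
        rw [Set.mem_singleton_iff] at hy
        subst hy
        exact hpadj
      have hcard : (T.neighborSet (x ⟨k, hk⟩)).ncard ≤ ({p} : Set V).ncard := by
        rw [hke, hlast hm, Set.ncard_singleton]
      have heq := Set.eq_of_subset_of_ncard_le hsub hcard (Set.toFinite _)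
      have hzmem : z ∈ ({p} : Set V) := by rw [heq]; exact hadj
      rw [Set.mem_singleton_iff] at hzmem
      subst hzmem
      rcases hpor with rfl | ⟨hk', h0, rfl⟩
      · exact absurd rfl hz
      · exact ⟨⟨k - 1, hk'⟩, rfl⟩

lemma away_mono {T : SimpleGraph V} (hT : T.IsTree) {v u u' : V}
    (h1 : T.Adj v u) (h2 : T.Adj u u') (hne : u' ≠ v) :
    ∀ w, Away T u u' w → Away T v u w := by
  intro w hw
  induction hw with
  | base _ => exact .step (.base h1.ne') h2 hne
  | @step w' z hw' hadj hz ih =>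
    by_cases hv : z = v
    · exfalso
      subst hv
      have hav : Away T u u' z := .step hw' hadj h1.ne
      exact not_away_adj hT h1.symm h2 (Ne.symm hne) hav.symm
    · exact .step ih hadj hv

lemma build_pendent {T : SimpleGraph V} (hT : T.IsTree) :
    ∀ (n : ℕ) (v u : V), T.Adj v u → (∀ w, Away T v u w → (T.neighborSet w).ncard ≤ 2) →
      {w | Away T v u w}.ncard ≤ n →
      ∃ (m : ℕ) (x : Fin m → V), PendentPath T v m x ∧ ∃ h : 0 < m, x ⟨0, h⟩ = u := by
  intro n
  induction n with
  | zero =>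
    intro v u hadj hdeg hcard
    exfalso
    have hu : u ∈ {w | Away T v u w} := Away.base hadj.ne'
    have := (Set.ncard_pos (Set.toFinite _)).mpr ⟨u, hu⟩
    omega
  | succ n ih =>
    intro v u hadj hdeg hcard
    have hvu : v ∈ T.neighborSet u := hadj.symm
    have hdu : (T.neighborSet u).ncard ≤ 2 := hdeg u (.base hadj.ne')
    have hdu1 : 1 ≤ (T.neighborSet u).ncard := (Set.ncard_pos (Set.toFinite _)).mpr ⟨v, hvu⟩
    by_cases hleaf : (T.neighborSet u).ncard = 1
    · refine ⟨1, fun _ => u, ⟨?_, ?_, ?_, ?_, ?_, ?_⟩, one_pos, rfl⟩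
      · intro i j _; exact Subsingleton.elim i j
      · intro _; exact hadj.ne'
      · intro _; exact hadj
      · intro i hi; exact absurd hi (by omega)
      · intro _; exact hleaf
      · intro i hi; exact absurd hi (by omega)
    · have hcard2 : (T.neighborSet u).ncard = 2 := by omega
      obtain ⟨u', hu'mem, hu'ne⟩ : ∃ y ∈ T.neighborSet u, y ≠ v := by
        by_contra hc
        push_neg at hc
        have hsub : T.neighborSet u ⊆ {v} := fun y hy => hc y hy
        have := Set.ncard_le_ncard hsub (Set.finite_singleton v)
        rw [Set.ncard_singleton] at this
        omega
      have hadj' : T.Adj u u' := hu'mem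
      have hmono := away_mono hT hadj hadj' hu'ne
      have hdeg' : ∀ w, Away T u u' w → (T.neighborSet w).ncard ≤ 2 :=
        fun w hw => hdeg w (hmono w hw)
      have hlt : {w | Away T u u' w}.ncard ≤ n := by
        have hsub : {w | Away T u u' w} ⊆ {w | Away T v u w} \ {u} := by
          intro w hw
          exact ⟨hmono w hw, hw.ne⟩
        have h1 := Set.ncard_le_ncard hsub (Set.toFinite _)
        have h2 : ({w | Away T v u w} \ {u}).ncard < {w | Away T v u w}.ncard :=
          Set.ncard_diff_singleton_lt_of_mem (Away.base hadj.ne') (Set.toFinite _)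
        omega
      obtain ⟨m, x, hpp, hm, hx0⟩ := ih u u' hadj' hdeg' hlt
      have hxu : ∀ i, x i ≠ u := hpp.2.1
      have hxv : ∀ i : Fin m, x i ≠ v := by
        intro i
        have h1 : Away T u (x ⟨0, hm⟩) (x i) := pendent_away hpp hm i.1 i.2
        rw [hx0] at h1
        exact (hmono _ h1).ne
      set y : Fin (m + 1) → V :=
        fun i => if h : (i : ℕ) = 0 then u else x ⟨(i : ℕ) - 1, by have := i.isLt; omega⟩ with hy
      have hy0 : ∀ (h : 0 < m + 1), y ⟨0, h⟩ = u := fun h => by simp [hy]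
      have hys : ∀ (k : ℕ) (h : k + 1 < m + 1) (hk : k < m), y ⟨k + 1, h⟩ = x ⟨k, hk⟩ := by
        intro k h hk
        simp only [hy]
        rw [dif_neg (show ¬ ((⟨k + 1, h⟩ : Fin (m + 1)) : ℕ) = 0 from Nat.succ_ne_zero k)]
        rfl
      refine ⟨m + 1, y, ⟨?_, ?_, ?_, ?_, ?_, ?_⟩, Nat.succ_pos m, hy0 _⟩
      · -- injective
        intro i j hij
        simp only [hy] at hij
        split_ifs at hij with hi hj hj
        · exact Fin.ext (by omega)
        · exact absurd hij.symm (hxu _)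
        · exact absurd hij (hxu _)
        · have := hpp.1 hij
          rw [Fin.mk.injEq] at this
          exact Fin.ext (by omega)
      · intro i
        simp only [hy]
        split_ifs with hi
        · exact hadj.ne'
        · exact hxv _
      · intro h
        rw [hy0]
        exact hadj
      · intro k h
        match k with
        | 0 =>
          rw [hy0, hys 0 h hm]
          have hx0' : x ⟨0, hm⟩ = u' := hx0
          rw [hx0']
          exact hadj'
        | j + 1 =>
          have hjm : j + 1 < m := by omega
          rw [hys j (by omega) (by omega), hys (j + 1) h hjm]
          exact hpp.2.2.2.1 j hjm
      · intro h
        have e : (⟨m + 1 - 1, Nat.sub_lt h one_pos⟩ : Fin (m + 1)) = ⟨(m - 1) + 1, by omega⟩ :=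
          Fin.ext (by simp; omega)
        rw [e, hys (m - 1) (by omega) (by omega)]
        have := hpp.2.2.2.2.1 hm
        convert this using 3
      · intro k h
        match k with
        | 0 =>
          rw [hy0 (by omega)]
          exact hcard2
        | j + 1 =>
          have hjm : j + 1 < m := by omega
          rw [hys j (by omega) (by omega)]
          exact hpp.2.2.2.2.2 j hjm

lemma center_of_max (T : SimpleGraph V) (hT : T.IsTree) {a b : V} (hne : b ≠ a)
    (ha : 3 ≤ (T.neighborSet a).ncard) (hb : 3 ≤ (T.neighborSet b).ncard)
    (hmax : ∀ w w' : V, w ≠ w' → 3 ≤ (T.neighborSet w).ncard → 3 ≤ (T.neighborSet w').ncard →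
      T.dist w w' ≤ T.dist a b) :
    PGSCenter T a := by
  obtain ⟨ub, hub, hubw⟩ := exists_adj_away hT hne
  refine ⟨ha, ub, ⟨hub, ?_⟩, ?_⟩
  · rintro ⟨m, x, hpp, hm, hx0⟩
    obtain ⟨i, hi⟩ := pendent_cover hpp hm b (by rw [hx0]; exact hubw)
    have := pendent_deg_le hpp i
    rw [hi] at this
    omega
  · rintro y ⟨hy, hybad⟩
    by_contra hyne
    apply hybad
    apply build_pendent hT ({w | Away T a y w}.ncard) a y hy ?_ le_rfl
    intro w hw
    by_contra hdw
    push_neg at hdw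
    have hw3 : 3 ≤ (T.neighborSet w).ncard := hdw
    have hwb : w ≠ b := by
      rintro rfl
      exact not_away_adj hT hy hub hyne (Away.trans hw (Away.symm hubw))
    have hblock : ¬ Away T a w b := by
      intro hab
      exact not_away_adj hT hy hub hyne (Away.trans (Away.trans hw hab) (Away.symm hubw))
    have h1 := dist_lt_of_blocked hT hw.ne hblock
    have h2 := hmax w b hwb hw3 hb
    omega

end TreeAux


theorem two_pendent_generalized_stars (T : SimpleGraph V) (hT : T.IsTree)
    (h : ∃ a b : V, a ≠ b ∧ 3 ≤ (T.neighborSet a).ncard ∧ 3 ≤ (T.neighborSet b).ncard) :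
    ∃ v w : V, v ≠ w ∧ PGSCenter T v ∧ PGSCenter T w := by
  classical
  obtain ⟨a0, b0, hne0, ha0, hb0⟩ := h
  let s : Finset (V × V) := Finset.univ.filter
    (fun p => p.1 ≠ p.2 ∧ 3 ≤ (T.neighborSet p.1).ncard ∧ 3 ≤ (T.neighborSet p.2).ncard)
  have hs : s.Nonempty := ⟨(a0, b0), by simp [s, hne0, ha0, hb0]⟩
  obtain ⟨⟨a, b⟩, hmem, hmax⟩ := Finset.exists_max_image s (fun p => T.dist p.1 p.2) hs
  simp only [s, Finset.mem_filter, Finset.mem_univ, true_and] at hmem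
  obtain ⟨hab, ha, hb⟩ := hmem
  have hmax' : ∀ w w' : V, w ≠ w' → 3 ≤ (T.neighborSet w).ncard →
      3 ≤ (T.neighborSet w').ncard → T.dist w w' ≤ T.dist a b := by
    intro w w' h1 h2 h3
    exact hmax (w, w') (by simp [s, h1, h2, h3])
  refine ⟨a, b, hab, ?_, ?_⟩
  · exact center_of_max T hT (Ne.symm hab) ha hb hmax'
  · apply center_of_max T hT hab hb ha
    intro w w' h1 h2 h3
    rw [show T.dist b a = T.dist a b from SimpleGraph.dist_comm]
    exact hmax' w w' h1 h2 h3
end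

section
/- Let W be a fort of a tree T with |V(T)| ≥ 2 and let w ∈ W. Then there exists a path P in T from a leaf x_1 to a distinct leaf x_2 passing through w such that x_1, x_2 ∈ W, and every vertex of P not in W has both of its neighbors on P in W. -/
variable {V : Type*} [Fintype V] [DecidableEq V]

section Aux

variable {T : SimpleGraph V} {W : Set V}

/-- The local condition along a list of vertices. -/
def GoodList (W : Set V) (l : List V) : Prop :=
  ∀ a b c : V, [a, b, c] <:+: l → b ∉ W → a ∈ W ∧ c ∈ W

lemma goodList_cons {s : V} {l : List V} (hl : GoodList W l)
    (h : ∀ b c t, l = b :: c :: t → b ∉ W → s ∈ W ∧ c ∈ W) :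
    GoodList W (s :: l) := by
  intro a b c hinf hb
  rcases List.infix_cons_iff.mp hinf with hpre | hinf'
  · obtain ⟨t, ht⟩ := hpre
    simp only [List.cons_append] at ht
    injection ht with h1 h2
    subst h1
    exact h b c t h2.symm hb
  · exact hl a b c hinf' hb

lemma GoodList.rev {l : List V} (hl : GoodList W l) : GoodList W l.reverse := by
  intro a b c hinf hb
  have h1 : [c, b, a].reverse <:+: l.reverse := by simpa using hinf
  have h2 : [c, b, a] <:+: l := List.reverse_infix.mp h1
  obtain ⟨hc, ha⟩ := hl c b a h2 hb
  exact ⟨ha, hc⟩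

lemma exists_adj' (hT : T.IsTree) (hcard : 2 ≤ Fintype.card V) (v : V) :
    ∃ u, T.Adj v u := by
  obtain ⟨u, hu⟩ := Fintype.exists_ne_of_one_lt_card (by omega) v
  obtain ⟨p⟩ := hT.isConnected.preconnected v u
  cases p with
  | nil => exact absurd rfl hu
  | cons h q => exact ⟨_, h⟩

lemma eq_getVert_one (hT : T.IsTree) {v y u : V} (P : T.Walk v y) (hP : P.IsPath)
    (h : T.Adj v u) (hu : u ∈ P.support) : P.getVert 1 = u := by
  have h1 : (SimpleGraph.Walk.cons h SimpleGraph.Walk.nil : T.Walk v u).IsPath := by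
    simp [h.ne]
  have h2 : P.takeUntil u hu = SimpleGraph.Walk.cons h SimpleGraph.Walk.nil :=
    (hT.existsUnique_path v u).unique (hP.takeUntil hu) h1
  have h3 := P.take_spec hu
  rw [h2] at h3
  rw [← h3]
  simp [SimpleGraph.Walk.cons_append, SimpleGraph.Walk.nil_append,
    SimpleGraph.Walk.getVert_cons_succ]

lemma path_loop_eq_nil {v : V} (p : T.Walk v v) (hp : p.IsPath) :
    p = SimpleGraph.Walk.nil := by
  cases p with
  | nil => rfl
  | cons h q =>
    rw [SimpleGraph.Walk.cons_isPath_iff] at hp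
    exact absurd q.end_mem_support hp.2

lemma fort_other_neighbor (hW : Fort T W) {u v : V} (huW : u ∉ W) (hv : v ∈ W)
    (hadj : T.Adj u v) : ∃ u', (u' ∈ W ∧ T.Adj u u') ∧ u' ≠ v := by
  by_contra hc
  push_neg at hc
  exact hW.2 u huW ⟨v, ⟨hv, hadj⟩, fun y' hy' => hc y' hy'⟩

lemma step_lemma (hT : T.IsTree) (hW : Fort T W) {v y : V} (P : T.Walk v y)
    (hP : P.IsPath) (hv : v ∈ W) (hG : GoodList W P.support)
    {a b : V} (ha : T.Adj v a) (hb : T.Adj v b) (hab : a ≠ b) :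
    ∃ (s : V) (P' : T.Walk s y), P'.IsPath ∧ s ∈ W ∧ GoodList W P'.support ∧
      P.support <:+ P'.support ∧ P.support.length < P'.support.length := by
  classical
  set u : V := if a = P.getVert 1 then b else a with hu_def
  have hadj : T.Adj v u := by
    by_cases hc : a = P.getVert 1 <;> simp [hu_def, hc, ha, hb]
  have hune : u ≠ P.getVert 1 := by
    by_cases hc : a = P.getVert 1
    · simp only [hu_def, if_pos hc]
      exact fun h => hab (hc.trans h.symm)
    · simp [hu_def, hc]
  have husup : u ∉ P.support := fun hmem =>
    hune (eq_getVert_one hT P hP hadj hmem).symm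
  have hP1 : (SimpleGraph.Walk.cons hadj.symm P).IsPath := hP.cons husup
  have headP : ∀ b' c t, P.support = b' :: c :: t → b' = v := by
    intro b' c t hPs
    exact (List.cons.inj (hPs.symm.trans P.support_eq_cons)).1
  have hGood1 : GoodList W (u :: P.support) := by
    refine goodList_cons hG ?_
    intro b' c t hPs hb'
    exact absurd ((headP b' c t hPs) ▸ hv) hb'
  by_cases huW : u ∈ W
  · refine ⟨u, SimpleGraph.Walk.cons hadj.symm P, hP1, huW, ?_, ?_, ?_⟩
    · rw [SimpleGraph.Walk.support_cons]; exact hGood1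
    · rw [SimpleGraph.Walk.support_cons]; exact List.suffix_cons _ _
    · rw [SimpleGraph.Walk.support_cons]
      simp only [List.length_cons]
      omega
  · obtain ⟨u', ⟨hu'W, hu'adj⟩, hu'v⟩ := fort_other_neighbor hW huW hv hadj.symm
    have hu'sup : u' ∉ (SimpleGraph.Walk.cons hadj.symm P).support := by
      intro hmem
      have h5 := eq_getVert_one hT _ hP1 hu'adj hmem
      rw [show (SimpleGraph.Walk.cons hadj.symm P).getVert 1 = v from P.getVert_zero] at h5
      exact hu'v h5.symm
    refine ⟨u', SimpleGraph.Walk.cons hu'adj.symm (SimpleGraph.Walk.cons hadj.symm P),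
      hP1.cons hu'sup, hu'W, ?_, ?_, ?_⟩
    · rw [SimpleGraph.Walk.support_cons, SimpleGraph.Walk.support_cons]
      refine goodList_cons hGood1 ?_
      intro b' c t hPs hb'
      have h6 := P.support_eq_cons
      rw [h6] at hPs
      injection hPs with h7 h8
      injection h8 with h9 _
      exact ⟨hu'W, h9.symm ▸ hv⟩
    · rw [SimpleGraph.Walk.support_cons, SimpleGraph.Walk.support_cons]
      exact (List.suffix_cons _ _).trans (List.suffix_cons _ _)
    · rw [SimpleGraph.Walk.support_cons, SimpleGraph.Walk.support_cons]
      simp only [List.length_cons]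
      omega

lemma extend_lemma (hT : T.IsTree) (hcard : 2 ≤ Fintype.card V) (hW : Fort T W) :
    ∀ (n : ℕ) {v y : V} (P : T.Walk v y), P.IsPath → v ∈ W → GoodList W P.support →
      Fintype.card V ≤ n + P.support.length →
      ∃ (x : V) (Q : T.Walk x y), Q.IsPath ∧ x ∈ W ∧ (T.neighborSet x).ncard = 1 ∧
        GoodList W Q.support ∧ P.support <:+ Q.support := by
  intro n
  induction n with
  | zero =>
    intro v y P hP hv hG hlen
    by_cases hleaf : (T.neighborSet v).ncard = 1
    · exact ⟨v, P, hP, hv, hleaf, hG, List.suffix_refl _⟩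
    · exfalso
      have hfin : (T.neighborSet v).Finite := Set.toFinite _
      obtain ⟨u0, hu0⟩ := exists_adj' hT hcard v
      have hpos : 0 < (T.neighborSet v).ncard :=
        (Set.ncard_pos hfin).mpr ⟨u0, hu0⟩
      have h2 : 1 < (T.neighborSet v).ncard := by omega
      obtain ⟨a, ha, b, hb, hab⟩ := (Set.one_lt_ncard hfin).mp h2
      obtain ⟨s, P', hP', _, _, _, hlt⟩ := step_lemma hT hW P hP hv hG ha hb hab
      have h3 := hP'.length_lt
      have h4 := P'.length_support
      omega
  | succ n ih =>
    intro v y P hP hv hG hlen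
    by_cases hleaf : (T.neighborSet v).ncard = 1
    · exact ⟨v, P, hP, hv, hleaf, hG, List.suffix_refl _⟩
    · have hfin : (T.neighborSet v).Finite := Set.toFinite _
      obtain ⟨u0, hu0⟩ := exists_adj' hT hcard v
      have hpos : 0 < (T.neighborSet v).ncard :=
        (Set.ncard_pos hfin).mpr ⟨u0, hu0⟩
      have h2 : 1 < (T.neighborSet v).ncard := by omega
      obtain ⟨a, ha, b, hb, hab⟩ := (Set.one_lt_ncard hfin).mp h2
      obtain ⟨s, P', hP', hs, hG', hsuf, hlt⟩ := step_lemma hT hW P hP hv hG ha hb hab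
      obtain ⟨x, Q, hQ, hx, hxleaf, hGQ, hsuf'⟩ := ih P' hP' hs hG' (by omega)
      exact ⟨x, Q, hQ, hx, hxleaf, hGQ, hsuf.trans hsuf'⟩

end Aux


theorem fort_leaf_to_leaf_path (T : SimpleGraph V) (hT : T.IsTree)
    (hcard : 2 ≤ Fintype.card V) (W : Set V) (hW : Fort T W) (w : V) (hw : w ∈ W) :
    ∃ (x₁ x₂ : V) (P : T.Walk x₁ x₂), P.IsPath ∧ w ∈ P.support ∧ x₁ ≠ x₂ ∧
      x₁ ∈ W ∧ x₂ ∈ W ∧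
      (T.neighborSet x₁).ncard = 1 ∧ (T.neighborSet x₂).ncard = 1 ∧
      ∀ a b c : V, [a, b, c] <:+: P.support → b ∉ W → a ∈ W ∧ c ∈ W := by
  classical
  by_cases hwleaf : (T.neighborSet w).ncard = 1
  · -- w is a leaf
    obtain ⟨u, hu⟩ := exists_adj' hT hcard w
    have hbase : ∃ (s : V) (P₀ : T.Walk s w), P₀.IsPath ∧ s ∈ W ∧
        GoodList W P₀.support ∧ 2 ≤ P₀.support.length := by
      by_cases huW : u ∈ W
      · refine ⟨u, SimpleGraph.Walk.cons hu.symm SimpleGraph.Walk.nil, ?_, huW, ?_, ?_⟩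
        · simp [hu.ne']
        · intro a b c hinf hb
          exfalso
          have := hinf.sublist.length_le
          simp at this
        · simp
      · obtain ⟨u', ⟨hu'W, hu'adj⟩, hu'w⟩ := fort_other_neighbor hW huW hw hu.symm
        refine ⟨u', SimpleGraph.Walk.cons hu'adj.symm
            (SimpleGraph.Walk.cons hu.symm SimpleGraph.Walk.nil), ?_, hu'W, ?_, ?_⟩
        · simp [hu.ne', hu'adj.ne', hu'w]
        · intro a b c hinf hb
          have hsupp : (SimpleGraph.Walk.cons hu'adj.symm
              (SimpleGraph.Walk.cons hu.symm (SimpleGraph.Walk.nil : T.Walk w w))).support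
              = [u', u, w] := by simp
          rw [hsupp] at hinf
          have heq := hinf.eq_of_length (by simp)
          injection heq with h1 h2
          injection h2 with h3 h4
          injection h4 with h5 _
          subst h1; subst h3; subst h5
          exact ⟨hu'W, hw⟩
        · simp
    obtain ⟨s, P₀, hP₀, hs, hG₀, hlen2⟩ := hbase
    obtain ⟨x₁, Q, hQ, hx₁W, hx₁leaf, hGQ, hsuf⟩ :=
      extend_lemma hT hcard hW (Fintype.card V) P₀ hP₀ hs hG₀ (Nat.le_add_right _ _)
    have hne : x₁ ≠ w := by
      intro h
      subst h
      have hnil := path_loop_eq_nil Q hQ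
      have hle := hsuf.length_le
      rw [hnil] at hle
      simp only [SimpleGraph.Walk.support_nil, List.length_cons, List.length_nil] at hle
      omega
    exact ⟨x₁, w, Q, hQ, Q.end_mem_support, hne, hx₁W, hw, hx₁leaf, hwleaf, hGQ⟩
  · -- w is not a leaf
    have hGnil : GoodList W (SimpleGraph.Walk.nil : T.Walk w w).support := by
      intro a b c hinf hb
      exfalso
      have := hinf.sublist.length_le
      simp at this
    obtain ⟨x₁, Q₁, hQ₁, hx₁W, hx₁leaf, hG₁, _⟩ :=
      extend_lemma hT hcard hW (Fintype.card V) (SimpleGraph.Walk.nil : T.Walk w w)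
        SimpleGraph.Walk.IsPath.nil hw hGnil (Nat.le_add_right _ _)
    have hGr : GoodList W Q₁.reverse.support := by
      rw [SimpleGraph.Walk.support_reverse]
      exact hG₁.rev
    obtain ⟨x₂, Q₂, hQ₂, hx₂W, hx₂leaf, hG₂, hsuf⟩ :=
      extend_lemma hT hcard hW (Fintype.card V) Q₁.reverse hQ₁.reverse hw hGr
        (Nat.le_add_right _ _)
    have hwsup : w ∈ Q₂.support := by
      have h1 : w ∈ Q₁.reverse.support := SimpleGraph.Walk.start_mem_support _
      exact hsuf.subset h1
    have hne : x₂ ≠ x₁ := by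
      intro h
      subst h
      have hnil := path_loop_eq_nil Q₂ hQ₂
      rw [hnil] at hwsup
      simp at hwsup
      subst hwsup
      exact hwleaf hx₂leaf
    exact ⟨x₂, x₁, Q₂, hQ₂, hwsup, hne, hx₂W, hx₁W, hx₂leaf, hx₁leaf, hG₂⟩
end

section
/- The cycle C_n is well-failed if and only if n ≤ 5 or n = 7. -/
variable {V : Type*} [Fintype V] [DecidableEq V]

namespace CycAux

/-- Independent set in the cycle `C_n`. -/
def Ind {n : ℕ} [NeZero n] (S : Set (Fin n)) : Prop := ∀ v ∈ S, v + 1 ∉ S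

/-- Maximal independent set in the cycle `C_n`. -/
def MaxInd {n : ℕ} [NeZero n] (S : Set (Fin n)) : Prop :=
  Ind S ∧ ∀ v ∉ S, v + 1 ∈ S ∨ ∃ u ∈ S, u + 1 = v

variable {m : ℕ}

lemma adj_iff (u v : Fin (m+2)) :
    (SimpleGraph.cycleGraph (m+2)).Adj u v ↔ (u = v + 1 ∨ v = u + 1) := by
  rw [SimpleGraph.cycleGraph_adj, sub_eq_iff_eq_add', sub_eq_iff_eq_add']

lemma val_succ (v : Fin (m+2)) : (v + 1).val = if v.val = m + 1 then 0 else v.val + 1 := by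
  rw [Fin.val_add_one]
  simp [Fin.ext_iff, Fin.last]

open Fin.NatCast Fin.CommRing in
lemma fort_no_consec {W : Set (Fin (m+2))} (hW : Fort (SimpleGraph.cycleGraph (m+2)) W)
    {v : Fin (m+2)} (h0 : v ∉ W) (h1 : v + 1 ∉ W) : False := by
  have key : ∀ j : ℕ, v + (j : Fin (m+2)) ∉ W ∧ v + (j : Fin (m+2)) + 1 ∉ W := by
    intro j
    induction j with
    | zero => simpa using ⟨h0, h1⟩
    | succ j ih =>
      obtain ⟨ha, hb⟩ := ih
      have hcast : ((j + 1 : ℕ) : Fin (m+2)) = (j : Fin (m+2)) + 1 := by push_cast; ring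
      rw [hcast, ← add_assoc]
      refine ⟨hb, ?_⟩
      intro hc
      refine hW.2 (v + (j : Fin (m+2)) + 1) hb ⟨v + (j : Fin (m+2)) + 1 + 1, ⟨hc, ?_⟩, ?_⟩
      · rw [adj_iff]; right; rfl
      · rintro w ⟨hwW, hwadj⟩
        rw [adj_iff] at hwadj
        rcases hwadj with h | h
        · exact absurd ((add_right_cancel h) ▸ hwW) ha
        · exact h
  obtain ⟨x, hx⟩ := hW.1
  have := (key ((x - v).val)).1
  rw [Fin.cast_val_eq_self] at this
  exact this (by convert hx using 2; ring)

lemma fort_compl_ind {W : Set (Fin (m+2))} (hW : Fort (SimpleGraph.cycleGraph (m+2)) W) :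
    Ind Wᶜ := fun v hv h1 => fort_no_consec hW hv h1

lemma two_ne_zero' (hm : 1 ≤ m) : (2 : Fin (m+2)) ≠ 0 := by
  have h2 : (2 : Fin (m+2)) = (1 : Fin (m+2)) + 1 := by rfl
  intro h
  rw [h2, Fin.ext_iff, Fin.val_add_one] at h
  have h1 : ((1 : Fin (m+2))).val = 1 := by simp
  have h0 : ((0 : Fin (m+2))).val = 0 := rfl
  have hl : (Fin.last (m+1)).val = m + 1 := rfl
  split at h
  · next hc => have := congrArg Fin.val hc; omega
  · omega

open Fin.CommRing in
lemma ind_compl_fort (hm : 1 ≤ m) {S : Set (Fin (m+2))} (hS : Ind S) :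
    Fort (SimpleGraph.cycleGraph (m+2)) Sᶜ := by
  constructor
  · rcases Set.eq_empty_or_nonempty S with h | ⟨v, hv⟩
    · exact ⟨0, by simp [h]⟩
    · exact ⟨v + 1, hS v hv⟩
  · intro v hv hex
    simp only [Set.notMem_compl_iff] at hv
    have h1 : v + 1 ∈ Sᶜ := hS v hv
    have h2 : v - 1 ∈ Sᶜ := by
      intro h2
      exact absurd hv (by simpa using hS (v-1) h2)
    obtain ⟨w, _, huniq⟩ := hex
    have e1 : v + 1 = w := huniq _ ⟨h1, by rw [adj_iff]; right; rfl⟩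
    have e2 : v - 1 = w := huniq _ ⟨h2, by rw [adj_iff]; left; ring⟩
    have : v + 1 = v - 1 := e1.trans e2.symm
    exact two_ne_zero' hm (by linear_combination this)

lemma minFort_iff_maxInd (hm : 1 ≤ m) (W : Set (Fin (m+2))) :
    MinimalFort (SimpleGraph.cycleGraph (m+2)) W ↔ MaxInd Wᶜ := by
  constructor
  · rintro ⟨hF, hmin⟩
    refine ⟨fort_compl_ind hF, ?_⟩
    intro v hv
    by_contra hneg
    push_neg at hneg
    obtain ⟨hv1, hall⟩ := hneg
    simp only [Set.notMem_compl_iff] at hv hv1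
    have hind : Ind (Wᶜ ∪ {v}) := by
      rintro u (hu | hu) h1
      · rcases h1 with h1 | h1
        · exact fort_no_consec hF hu h1
        · exact hall u hu h1
      · simp only [Set.mem_singleton_iff] at hu
        subst hu
        rcases h1 with h1 | h1
        · exact h1 hv1
        · simp only [Set.mem_singleton_iff] at h1
          exact absurd h1 (by simp)
    have hF' := ind_compl_fort hm hind
    have hsub : (Wᶜ ∪ {v})ᶜ ⊆ W := by
      rw [Set.compl_union, compl_compl]
      exact Set.inter_subset_left
    have := hmin _ hF' hsub
    have hvW : v ∈ (Wᶜ ∪ {v})ᶜ := by rw [this]; exact hv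
    simp at hvW
  · rintro ⟨hI, hM⟩
    have hF : Fort (SimpleGraph.cycleGraph (m+2)) W := by
      have := ind_compl_fort hm hI
      rwa [compl_compl] at this
    refine ⟨hF, ?_⟩
    intro W' hF' hsub
    have hT : Ind W'ᶜ := fort_compl_ind hF'
    have hTS : Wᶜ ⊆ W'ᶜ := Set.compl_subset_compl.mpr hsub
    have : W'ᶜ = Wᶜ := by
      apply Set.Subset.antisymm _ hTS
      intro v hvT
      by_contra hvS
      rcases hM v hvS with h | ⟨u, huS, hue⟩
      · exact hT v hvT (hTS h)
      · exact hT u (hTS huS) (hue ▸ hvT)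
    have := congrArg compl this
    simpa [compl_compl] using this

lemma minFort_of_maxInd (hm : 1 ≤ m) {S : Set (Fin (m+2))} (hS : MaxInd S) :
    MinimalFort (SimpleGraph.cycleGraph (m+2)) Sᶜ := by
  rw [minFort_iff_maxInd hm, compl_compl]; exact hS

def IndF {n : ℕ} [NeZero n] (A : Finset (Fin n)) : Prop := ∀ v ∈ A, v + 1 ∉ A
def MaxIndFp {n : ℕ} [NeZero n] (A : Finset (Fin n)) : Prop :=
  ∀ v, v ∉ A → (v + 1 ∈ A ∨ ∃ u ∈ A, u + 1 = v)

instance {n : ℕ} [NeZero n] (A : Finset (Fin n)) : Decidable (IndF A) := by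
  unfold IndF; infer_instance
instance {n : ℕ} [NeZero n] (A : Finset (Fin n)) : Decidable (MaxIndFp A) := by
  unfold MaxIndFp; infer_instance

lemma maxInd_ncard {n : ℕ} [NeZero n] {c : ℕ}
    (h : ∀ A : Finset (Fin n), IndF A → MaxIndFp A → A.card = c)
    {S : Set (Fin n)} (hS : MaxInd S) : S.ncard = c := by
  classical
  rw [Set.ncard_eq_toFinset_card']
  apply h
  · intro v hv hv1
    rw [Set.mem_toFinset] at hv hv1
    exact hS.1 v hv hv1
  · intro v hv
    rw [Set.mem_toFinset] at hv
    rcases hS.2 v hv with h1 | ⟨u, hu, hue⟩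
    · left; rwa [Set.mem_toFinset]
    · right; exact ⟨u, by rwa [Set.mem_toFinset], hue⟩

set_option maxRecDepth 10000 in
lemma card3 : ∀ A : Finset (Fin 3), IndF A → MaxIndFp A → A.card = 1 := by decide
set_option maxRecDepth 10000 in
lemma card4 : ∀ A : Finset (Fin 4), IndF A → MaxIndFp A → A.card = 2 := by decide
set_option maxRecDepth 10000 in
lemma card5 : ∀ A : Finset (Fin 5), IndF A → MaxIndFp A → A.card = 2 := by decide
set_option maxRecDepth 100000 in
lemma card7 : ∀ A : Finset (Fin 7), IndF A → MaxIndFp A → A.card = 3 := by decide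

lemma even_case (hm : 4 ≤ m) (he : m % 2 = 0) :
    ∃ S1 S2 : Set (Fin (m+2)), MaxInd S1 ∧ MaxInd S2 ∧ S2.ncard < S1.ncard := by
  refine ⟨{v | v.val % 2 = 0}, {v | v.val = 0 ∨ (v.val % 2 = 1 ∧ 3 ≤ v.val ∧ v.val ≤ m - 1)},
    ⟨?_, ?_⟩, ⟨?_, ?_⟩, ?_⟩
  · intro v hv hv1
    simp only [Set.mem_setOf_eq] at hv hv1
    rw [val_succ] at hv1
    have := v.isLt
    split at hv1 <;> omega
  · intro v hv
    left
    simp only [Set.mem_setOf_eq] at hv ⊢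
    rw [val_succ]
    have := v.isLt
    split <;> omega
  · intro v hv hv1
    simp only [Set.mem_setOf_eq] at hv hv1
    rw [val_succ] at hv1
    have := v.isLt
    split at hv1 <;> omega
  · intro v hv
    simp only [Set.mem_setOf_eq] at hv
    have hvlt := v.isLt
    by_cases hc : (v.val = 1 ∨ (v.val % 2 = 0 ∧ 4 ≤ v.val ∧ v.val ≤ m))
    · right
      refine ⟨⟨v.val - 1, by omega⟩, ?_, ?_⟩
      · simp only [Set.mem_setOf_eq, Fin.val_mk]; omega
      · rw [Fin.ext_iff, val_succ]
        simp only [Fin.val_mk]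
        split <;> omega
    · left
      simp only [Set.mem_setOf_eq]
      rw [val_succ]
      split <;> omega
  · have hx1 : (⟨2, by omega⟩ : Fin (m+2)) ∈ {v : Fin (m+2) | v.val % 2 = 0} := by
      simp only [Set.mem_setOf_eq, Fin.val_mk]
    have hle : ({v : Fin (m+2) | v.val = 0 ∨ (v.val % 2 = 1 ∧ 3 ≤ v.val ∧ v.val ≤ m - 1)}).ncard
        ≤ ({v : Fin (m+2) | v.val % 2 = 0} \ {⟨2, by omega⟩}).ncard := by
      apply Set.ncard_le_ncard_of_injOn (fun v => if v.val = 0 then v else v + 1)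
      · intro a ha
        simp only [Set.mem_setOf_eq] at ha
        have := a.isLt
        simp only [Set.mem_diff, Set.mem_setOf_eq, Set.mem_singleton_iff, Fin.ext_iff, Fin.val_mk]
        split
        · constructor <;> omega
        · rw [val_succ]
          constructor
          · split <;> omega
          · split <;> omega
      · intro a ha b hb hab
        simp only [Set.mem_setOf_eq] at ha hb
        have ha' := a.isLt
        have hb' := b.isLt
        simp only at hab
        split at hab <;> split at hab
        · exact hab
        · exfalso; have := congrArg Fin.val hab; rw [val_succ] at this; split at this <;> omega
        · exfalso; have := congrArg Fin.val hab; rw [val_succ] at this; split at this <;> omega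
        · exact add_right_cancel hab
    exact lt_of_le_of_lt hle (Set.ncard_diff_singleton_lt_of_mem hx1 (Set.toFinite _))

lemma odd_case (hm : 7 ≤ m) (ho : m % 2 = 1) :
    ∃ S1 S2 : Set (Fin (m+2)), MaxInd S1 ∧ MaxInd S2 ∧ S2.ncard < S1.ncard := by
  refine ⟨{v | v.val % 2 = 0 ∧ v.val ≤ m - 1},
    {v | v.val = 0 ∨ v.val = 3 ∨ v.val = 6 ∨ (v.val % 2 = 0 ∧ 8 ≤ v.val ∧ v.val ≤ m - 1)},
    ⟨?_, ?_⟩, ⟨?_, ?_⟩, ?_⟩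
  · intro v hv hv1
    simp only [Set.mem_setOf_eq] at hv hv1
    rw [val_succ] at hv1
    have := v.isLt
    split at hv1 <;> omega
  · intro v hv
    simp only [Set.mem_setOf_eq] at hv
    have hvlt := v.isLt
    by_cases hc : v.val % 2 = 1
    · right
      refine ⟨⟨v.val - 1, by omega⟩, ?_, ?_⟩
      · simp only [Set.mem_setOf_eq, Fin.val_mk]; omega
      · rw [Fin.ext_iff, val_succ]
        simp only [Fin.val_mk]
        split <;> omega
    · left
      simp only [Set.mem_setOf_eq]
      rw [val_succ]
      split <;> omega
  · intro v hv hv1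
    simp only [Set.mem_setOf_eq] at hv hv1
    rw [val_succ] at hv1
    have := v.isLt
    split at hv1 <;> omega
  · intro v hv
    simp only [Set.mem_setOf_eq] at hv
    have hvlt := v.isLt
    by_cases hc : (v.val = 1 ∨ v.val = 4 ∨ v.val = 7 ∨ (v.val % 2 = 1 ∧ 9 ≤ v.val ∧ v.val ≤ m))
    · right
      refine ⟨⟨v.val - 1, by omega⟩, ?_, ?_⟩
      · simp only [Set.mem_setOf_eq, Fin.val_mk]; omega
      · rw [Fin.ext_iff, val_succ]
        simp only [Fin.val_mk]
        split <;> omega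
    · left
      simp only [Set.mem_setOf_eq]
      rw [val_succ]
      split <;> omega
  · have hx1 : (⟨m - 1, by omega⟩ : Fin (m+2)) ∈ {v : Fin (m+2) | v.val % 2 = 0 ∧ v.val ≤ m - 1} := by
      simp only [Set.mem_setOf_eq, Fin.val_mk]; omega
    have hle : ({v : Fin (m+2) | v.val = 0 ∨ v.val = 3 ∨ v.val = 6 ∨
          (v.val % 2 = 0 ∧ 8 ≤ v.val ∧ v.val ≤ m - 1)}).ncard
        ≤ ({v : Fin (m+2) | v.val % 2 = 0 ∧ v.val ≤ m - 1} \ {⟨m - 1, by omega⟩}).ncard := by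
      apply Set.ncard_le_ncard_of_injOn
        (fun v => (⟨if v.val = 0 then 0 else if v.val = 3 then 2 else if v.val = 6 then 4 else v.val - 2,
          by have := v.isLt; split_ifs <;> omega⟩ : Fin (m+2)))
      · intro a ha
        simp only [Set.mem_setOf_eq] at ha
        have := a.isLt
        simp only [Set.mem_diff, Set.mem_setOf_eq, Set.mem_singleton_iff, Fin.ext_iff, Fin.val_mk]
        refine ⟨⟨?_, ?_⟩, ?_⟩ <;> (split_ifs <;> omega)
      · intro a ha b hb hab
        simp only [Set.mem_setOf_eq] at ha hb
        simp only [Fin.mk.injEq] at hab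
        rw [Fin.ext_iff]
        split_ifs at hab <;> omega
    exact lt_of_le_of_lt hle (Set.ncard_diff_singleton_lt_of_mem hx1 (Set.toFinite _))

end CycAux

theorem cycle_wellFailed_iff (n : ℕ) (hn : 3 ≤ n) :
    (∀ W W' : Set (Fin n), MinimalFort (SimpleGraph.cycleGraph n) W →
      MinimalFort (SimpleGraph.cycleGraph n) W' → W.ncard = W'.ncard) ↔
    (n ≤ 5 ∨ n = 7) := by
  obtain ⟨m, rfl⟩ : ∃ m, n = m + 2 := ⟨n - 2, by omega⟩
  have hm : 1 ≤ m := by omega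
  constructor
  · intro H
    by_contra hcon
    push_neg at hcon
    obtain ⟨h5, h7⟩ := hcon
    obtain ⟨S1, S2, hS1, hS2, hlt⟩ :
        ∃ S1 S2 : Set (Fin (m+2)), CycAux.MaxInd S1 ∧ CycAux.MaxInd S2 ∧ S2.ncard < S1.ncard := by
      rcases (by omega : (4 ≤ m ∧ m % 2 = 0) ∨ (7 ≤ m ∧ m % 2 = 1)) with ⟨h1, h2⟩ | ⟨h1, h2⟩
      · exact CycAux.even_case h1 h2
      · exact CycAux.odd_case h1 h2
    have heq := H _ _ (CycAux.minFort_of_maxInd hm hS1) (CycAux.minFort_of_maxInd hm hS2)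
    have c1 := Set.ncard_add_ncard_compl S1
    have c2 := Set.ncard_add_ncard_compl S2
    rw [Nat.card_eq_fintype_card, Fintype.card_fin] at c1 c2
    omega
  · intro h W W' hW hW'
    rw [CycAux.minFort_iff_maxInd hm] at hW hW'
    have key : Wᶜ.ncard = W'ᶜ.ncard := by
      rcases (by omega : m = 1 ∨ m = 2 ∨ m = 3 ∨ m = 5) with rfl | rfl | rfl | rfl
      · rw [CycAux.maxInd_ncard CycAux.card3 hW, CycAux.maxInd_ncard CycAux.card3 hW']
      · rw [CycAux.maxInd_ncard CycAux.card4 hW, CycAux.maxInd_ncard CycAux.card4 hW']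
      · rw [CycAux.maxInd_ncard CycAux.card5 hW, CycAux.maxInd_ncard CycAux.card5 hW']
      · rw [CycAux.maxInd_ncard CycAux.card7 hW, CycAux.maxInd_ncard CycAux.card7 hW']
    have c1 := Set.ncard_add_ncard_compl W
    have c2 := Set.ncard_add_ncard_compl W'
    rw [Nat.card_eq_fintype_card, Fintype.card_fin] at c1 c2
    omega
end

section
/- Every complete bipartite graph K_{m,n} with m, n ≥ 2 is well-failed: every minimal fort consists of exactly two vertices lying in the same partite set. -/
variable {V : Type*} [Fintype V] [DecidableEq V]

lemma pair_left_fort {m n : ℕ} (x y : Fin m) (hxy : x ≠ y) :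
    Fort (completeBipartiteGraph (Fin m) (Fin n)) {Sum.inl x, Sum.inl y} := by
  refine ⟨⟨Sum.inl x, Set.mem_insert _ _⟩, ?_⟩
  rintro v hv ⟨w, ⟨hwW, hadj⟩, huniq⟩
  rcases v with z | z
  · rcases hwW with rfl | rfl <;> simp [completeBipartiteGraph] at hadj
  · have h1 : Sum.inl x = w :=
      huniq _ ⟨Set.mem_insert _ _, by simp [completeBipartiteGraph]⟩
    have h2 : Sum.inl y = w :=
      huniq _ ⟨Set.mem_insert_of_mem _ rfl, by simp [completeBipartiteGraph]⟩
    exact hxy (Sum.inl.inj (h1.trans h2.symm))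

lemma pair_right_fort {m n : ℕ} (x y : Fin n) (hxy : x ≠ y) :
    Fort (completeBipartiteGraph (Fin m) (Fin n)) {Sum.inr x, Sum.inr y} := by
  refine ⟨⟨Sum.inr x, Set.mem_insert _ _⟩, ?_⟩
  rintro v hv ⟨w, ⟨hwW, hadj⟩, huniq⟩
  rcases v with z | z
  · have h1 : Sum.inr x = w :=
      huniq _ ⟨Set.mem_insert _ _, by simp [completeBipartiteGraph]⟩
    have h2 : Sum.inr y = w :=
      huniq _ ⟨Set.mem_insert_of_mem _ rfl, by simp [completeBipartiteGraph]⟩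
    exact hxy (Sum.inr.inj (h1.trans h2.symm))
  · rcases hwW with rfl | rfl <;> simp [completeBipartiteGraph] at hadj

theorem completeBipartite_wellFailed (m n : ℕ) (hm : 2 ≤ m) (hn : 2 ≤ n) :
    ∀ W : Set (Fin m ⊕ Fin n), MinimalFort (completeBipartiteGraph (Fin m) (Fin n)) W →
      ∃ a b, a ≠ b ∧ W = {a, b} ∧
        ((∃ x y, a = Sum.inl x ∧ b = Sum.inl y) ∨
         (∃ x y, a = Sum.inr x ∧ b = Sum.inr y)) := by
  haveI : Nontrivial (Fin m) := Fin.nontrivial_iff_two_le.mpr hm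
  haveI : Nontrivial (Fin n) := Fin.nontrivial_iff_two_le.mpr hn
  rintro W ⟨⟨⟨w0, hw0⟩, hfort⟩, hmin⟩
  by_cases hL : ∃ x y : Fin m, x ≠ y ∧ Sum.inl x ∈ W ∧ Sum.inl y ∈ W
  · obtain ⟨x, y, hxy, hx, hy⟩ := hL
    have hsub : ({Sum.inl x, Sum.inl y} : Set (Fin m ⊕ Fin n)) ⊆ W := by
      rintro v (rfl | rfl) <;> assumption
    have hW := hmin _ (pair_left_fort x y hxy) hsub
    exact ⟨Sum.inl x, Sum.inl y, by simp [hxy], hW.symm, Or.inl ⟨x, y, rfl, rfl⟩⟩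
  by_cases hR : ∃ a b : Fin n, a ≠ b ∧ Sum.inr a ∈ W ∧ Sum.inr b ∈ W
  · obtain ⟨x, y, hxy, hx, hy⟩ := hR
    have hsub : ({Sum.inr x, Sum.inr y} : Set (Fin m ⊕ Fin n)) ⊆ W := by
      rintro v (rfl | rfl) <;> assumption
    have hW := hmin _ (pair_right_fort x y hxy) hsub
    exact ⟨Sum.inr x, Sum.inr y, by simp [hxy], hW.symm, Or.inr ⟨x, y, rfl, rfl⟩⟩
  exfalso
  push_neg at hL hR
  rcases w0 with x | a
  · by_cases hr : ∃ a : Fin n, Sum.inr a ∈ W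
    · obtain ⟨a, ha⟩ := hr
      obtain ⟨y, hy⟩ := exists_ne x
      have hvnot : Sum.inl y ∉ W := hL x y (Ne.symm hy) hw0
      apply hfort _ hvnot
      refine ⟨Sum.inr a, ⟨ha, by simp [completeBipartiteGraph]⟩, ?_⟩
      rintro (z | b) ⟨hw', hadj⟩
      · simp [completeBipartiteGraph] at hadj
      · by_contra h
        exact hR b a (fun e => h (congrArg Sum.inr e)) hw' ha
    · have hvnot : Sum.inr ⟨0, by omega⟩ ∉ W := fun h => hr ⟨_, h⟩
      apply hfort _ hvnot
      refine ⟨Sum.inl x, ⟨hw0, by simp [completeBipartiteGraph]⟩, ?_⟩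
      rintro (z | b) ⟨hw', hadj⟩
      · by_contra h
        exact hL z x (fun e => h (congrArg Sum.inl e)) hw' hw0
      · simp [completeBipartiteGraph] at hadj
  · by_cases hl : ∃ x : Fin m, Sum.inl x ∈ W
    · obtain ⟨x, hx⟩ := hl
      obtain ⟨b, hb⟩ := exists_ne a
      have hvnot : Sum.inr b ∉ W := hR a b (Ne.symm hb) hw0
      apply hfort _ hvnot
      refine ⟨Sum.inl x, ⟨hx, by simp [completeBipartiteGraph]⟩, ?_⟩
      rintro (z | c) ⟨hw', hadj⟩
      · by_contra h
        exact hL z x (fun e => h (congrArg Sum.inl e)) hw' hx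
      · simp [completeBipartiteGraph] at hadj
    · have hvnot : Sum.inl ⟨0, by omega⟩ ∉ W := fun h => hl ⟨_, h⟩
      apply hfort _ hvnot
      refine ⟨Sum.inr a, ⟨hw0, by simp [completeBipartiteGraph]⟩, ?_⟩
      rintro (z | b) ⟨hw', hadj⟩
      · simp [completeBipartiteGraph] at hadj
      · by_contra h
        exact hR b a (fun e => h (congrArg Sum.inr e)) hw' hw0
end

section
/- The Petersen graph is well-failed: every minimal fort of the Petersen graph has exactly four vertices. -/
variable {V : Type*} [Fintype V] [DecidableEq V]

/-- The Petersen graph as the Kneser graph `K(5,2)`: vertices are the 2-element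
subsets of a 5-element set, adjacent when disjoint. -/
def petersen : SimpleGraph {s : Finset (Fin 5) // s.card = 2} where
  Adj a b := Disjoint a.val b.val
  symm := ⟨fun _ _ h => Disjoint.symm h⟩
  loopless := ⟨fun a h => by
    have h0 : a.val = ∅ := by simpa using disjoint_self.mp h
    have h2 := a.property
    rw [h0] at h2
    simp at h2⟩


section Aux


abbrev PV := {s : Finset (Fin 5) // s.card = 2}

def nbrL : List ℕ := [800, 656, 584, 388, 322, 193, 52, 42, 25, 7]
def adjT (v w : Fin 10) : Bool := (nbrL.getD v.val 0).testBit w.val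
def memB (m : ℕ) (i : Fin 10) : Bool := m.testBit i.val
def FortN (m : ℕ) : Prop :=
  m ≠ 0 ∧ ∀ v : Fin 10, memB m v = true ∨ ¬∃! w : Fin 10, adjT v w = true ∧ memB m w = true
instance (m : ℕ) : Decidable (FortN m) := by unfold FortN ExistsUnique; infer_instance
def pcN (m : ℕ) : ℕ := (Finset.univ.filter (fun i : Fin 10 => memB m i = true)).card
def forts4 : List ℕ := [30,45,51,75,149,198,216,294,325,360,387,432,568,593,610,649,676,778,788,960]

set_option maxRecDepth 100000 in
set_option maxHeartbeats 8000000 in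
theorem keyLemma : ∀ m : ℕ, m < 1024 → FortN m →
    pcN m = 4 ∨ ∃ f ∈ forts4, (∀ i : Fin 10, memB f i = true → memB m i = true) ∧
      (∃ i : Fin 10, memB m i = true ∧ memB f i = false) ∧ FortN f := by decide

def vl : List PV :=
  [⟨{0,1}, by decide⟩, ⟨{0,2}, by decide⟩, ⟨{1,2}, by decide⟩, ⟨{0,3}, by decide⟩,
   ⟨{1,3}, by decide⟩, ⟨{2,3}, by decide⟩, ⟨{0,4}, by decide⟩, ⟨{1,4}, by decide⟩,
   ⟨{2,4}, by decide⟩, ⟨{3,4}, by decide⟩]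

def vtx (i : Fin 10) : PV := vl.getD i.val ⟨{0,1}, by decide⟩

theorem vtx_inj : ∀ i j : Fin 10, vtx i = vtx j → i = j := by decide
theorem vtx_surj : ∀ v : PV, ∃ i : Fin 10, vtx i = v := by decide
theorem vtx_adj : ∀ i j : Fin 10, ((vtx i).val ∩ (vtx j).val = ∅) ↔ adjT i j = true := by decide

theorem forts4_mem : ∀ f ∈ forts4, ∃ b : Fin 10, memB f b = true := by decide

def orFold (l : List ℕ) : ℕ := l.foldr (fun i m => 2 ^ i ||| m) 0

theorem testBit_orFold (l : List ℕ) (j : ℕ) : (orFold l).testBit j = true ↔ j ∈ l := by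
  induction l with
  | nil => simp [orFold, Nat.zero_testBit]
  | cons a t ih =>
    simp only [orFold, List.foldr_cons, Nat.testBit_or, Bool.or_eq_true, List.mem_cons,
      Nat.testBit_two_pow] at *
    constructor
    · rintro (h | h)
      · exact Or.inl (of_decide_eq_true h).symm
      · exact Or.inr (ih.mp h)
    · rintro (rfl | h)
      · exact Or.inl (by simp)
      · exact Or.inr (ih.mpr h)

theorem orFold_lt (l : List ℕ) (h : ∀ a ∈ l, a < 10) : orFold l < 1024 := by
  induction l with
  | nil => norm_num [orFold]
  | cons a t ih =>
    have h1 : (2 : ℕ) ^ a < 2 ^ 10 :=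
      Nat.pow_lt_pow_right (by norm_num) (h a (by simp))
    have h2 : orFold t < 1024 := ih (fun b hb => h b (by simp [hb]))
    exact Nat.or_lt_two_pow h1 h2

theorem petersen_adj_iff (u v : PV) : petersen.Adj u v ↔ (u.val ∩ v.val = ∅) := by
  show Disjoint u.val v.val ↔ _
  exact Finset.disjoint_iff_inter_eq_empty


end Aux

theorem petersen_wellFailed :
    ∀ W : Set {s : Finset (Fin 5) // s.card = 2}, MinimalFort petersen W → W.ncard = 4 := by
  classical
  intro W hW
  obtain ⟨⟨hne, hfort⟩, hmin⟩ := hW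
  -- the mask of W
  set l : List ℕ := ((List.finRange 10).filter (fun i => decide (vtx i ∈ W))).map Fin.val with hl
  set m : ℕ := orFold l with hm
  have hl10 : ∀ a ∈ l, a < 10 := by
    intro a ha
    simp only [hl, List.mem_map, List.mem_filter] at ha
    obtain ⟨i, _, rfl⟩ := ha
    exact i.isLt
  have hmlt : m < 1024 := orFold_lt l hl10
  have hchar : ∀ i : Fin 10, memB m i = true ↔ vtx i ∈ W := by
    intro i
    rw [memB, hm, testBit_orFold]
    simp only [hl, List.mem_map, List.mem_filter, List.mem_finRange, true_and]
    constructor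
    · rintro ⟨j, hj, hji⟩
      have : j = i := Fin.ext hji
      subst this; exact of_decide_eq_true hj
    · intro hi; exact ⟨i, decide_eq_true hi, rfl⟩
  -- transfer set membership
  have hWeq : W = ↑((Finset.univ.filter (fun i : Fin 10 => memB m i = true)).image vtx) := by
    ext v
    simp only [Finset.mem_coe, Finset.mem_image, Finset.mem_filter, Finset.mem_univ, true_and]
    constructor
    · intro hv
      obtain ⟨i, rfl⟩ := vtx_surj v
      exact ⟨i, (hchar i).mpr hv, rfl⟩
    · rintro ⟨i, hi, rfl⟩
      exact (hchar i).mp hi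
  -- FortN m
  have hFN : FortN m := by
    constructor
    · obtain ⟨v, hv⟩ := hne
      obtain ⟨i, rfl⟩ := vtx_surj v
      intro h0
      have := (hchar i).mpr hv
      rw [h0] at this
      simp [memB, Nat.zero_testBit] at this
    · intro v
      by_cases hv : memB m v = true
      · exact Or.inl hv
      · refine Or.inr ?_
        rintro ⟨w, ⟨haw, hwm⟩, huniq⟩
        have hvW : vtx v ∉ W := fun h => hv ((hchar v).mpr h)
        refine hfort (vtx v) hvW ⟨vtx w, ⟨(hchar w).mp hwm, ?_⟩, ?_⟩
        · rw [petersen_adj_iff]; exact (vtx_adj v w).mpr haw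
        · rintro y ⟨hyW, hyadj⟩
          obtain ⟨j, rfl⟩ := vtx_surj y
          have : j = w := by
            refine huniq j ⟨?_, (hchar j).mpr hyW⟩
            rw [← vtx_adj]; exact (petersen_adj_iff _ _).mp hyadj
          rw [this]
  -- apply the computational lemma
  rcases keyLemma m hmlt hFN with h4 | ⟨f, hf4, hsub, ⟨i0, hi0m, hi0f⟩, hFNf⟩
  · -- |W| = 4
    rw [hWeq, Set.ncard_coe_finset,
      Finset.card_image_of_injective _ (fun i j h => vtx_inj i j h)]
    exact h4
  · -- contradiction with minimality
    exfalso
    set W' : Set PV := ↑((Finset.univ.filter (fun i : Fin 10 => memB f i = true)).image vtx)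
      with hW'
    have hcharf : ∀ v : PV, v ∈ W' ↔ ∃ i : Fin 10, memB f i = true ∧ vtx i = v := by
      intro v
      simp only [hW', Finset.mem_coe, Finset.mem_image, Finset.mem_filter, Finset.mem_univ,
        true_and]
    have hsub' : W' ⊆ W := by
      intro v hv
      obtain ⟨i, hif, rfl⟩ := (hcharf v).mp hv
      exact (hchar i).mp (hsub i hif)
    have hfort' : Fort petersen W' := by
      constructor
      · obtain ⟨hf0, _⟩ := hFNf
        obtain ⟨b, hb⟩ : ∃ b : Fin 10, memB f b = true := forts4_mem f hf4
        exact ⟨vtx b, (hcharf _).mpr ⟨b, hb, rfl⟩⟩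
      · intro v hv
        obtain ⟨j, rfl⟩ := vtx_surj v
        have hjf : memB f j = false := by
          by_contra h
          exact hv ((hcharf _).mpr ⟨j, by simpa using h, rfl⟩)
        rintro ⟨w, ⟨hwW', hadjw⟩, huniq⟩
        obtain ⟨hf0, hforts⟩ := hFNf
        rcases hforts j with hj | hnex
        · rw [hjf] at hj; simp at hj
        · refine hnex ?_
          obtain ⟨k, hkf, rfl⟩ := (hcharf w).mp hwW'
          refine ⟨k, ⟨?_, hkf⟩, ?_⟩
          · rw [← vtx_adj]; exact (petersen_adj_iff _ _).mp hadjw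
          · rintro y ⟨hyadj, hyf⟩
            have : vtx y = vtx k := by
              refine huniq (vtx y) ⟨(hcharf _).mpr ⟨y, hyf, rfl⟩, ?_⟩
              rw [petersen_adj_iff]; exact (vtx_adj _ _).mpr hyadj
            exact vtx_inj _ _ this
    have := hmin W' hfort' hsub'
    -- but vtx i0 ∈ W \ W'
    have hi0W : vtx i0 ∈ W := (hchar i0).mp hi0m
    have hi0W' : vtx i0 ∉ W' := by
      intro h
      obtain ⟨k, hk, hkeq⟩ := (hcharf _).mp h
      have : k = i0 := vtx_inj _ _ hkeq
      subst this
      rw [hk] at hi0f; simp at hi0f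
    rw [this] at hi0W'
    exact hi0W' hi0W
end
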